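/- arXiv:2507.18776 — 9 statements merged into one kernel-verified Lean document; each statement's English description precedes it below -/
import Mathlib

section
/- If G is a regular K3-irregular simple graph, then its complement Ḡ is also a regular K3-irregular graph. -/
/-- The `K₃`-degree (triangle-degree) of a vertex `v` in a finite simple graph `G`:
the number of triangles (3-cliques) of `G` containing `v`. -/
def K3deg {V : Type*} (G : SimpleGraph V) [Fintype V] [DecidableEq V] [DecidableRel G.Adj]
    (v : V) : ℕ :=
  ((G.cliqueFinset 3).filter (fun t => v ∈ t)).card

open Finset

namespace K3aux

variable {V : Type*} [Fintype V] [DecidableEq V]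

/-- Integer adjacency indicator. -/
def F (G : SimpleGraph V) [DecidableRel G.Adj] (x y : V) : ℤ :=
  if G.Adj x y then 1 else 0

/-- Off-diagonal indicator. -/
def D (x y : V) : ℤ := if x = y then 0 else 1

section Basic

variable (G : SimpleGraph V) [DecidableRel G.Adj]

lemma F_symm (x y : V) : F G x y = F G y x := by
  simp [F, SimpleGraph.adj_comm]

lemma F_self (x : V) : F G x x = 0 := by simp [F]

lemma F_sq (x y : V) : F G x y * F G x y = F G x y := by
  unfold F; split_ifs <;> ring

lemma Fc (x y : V) : F Gᶜ x y = D x y - F G x y := by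
  unfold F D
  by_cases h : x = y
  · subst h; simp
  · simp only [SimpleGraph.compl_adj, if_neg h]
    by_cases hadj : G.Adj x y
    · simp [hadj, h]
    · simp [hadj, h]

end Basic

section Sums

variable {G : SimpleGraph V} [DecidableRel G.Adj] {r : ℕ}

lemma sum_F (hreg : G.IsRegularOfDegree r) (x : V) : ∑ y, F G x y = (r : ℤ) := by
  unfold F
  rw [Finset.sum_boole]
  have h1 : univ.filter (fun y => G.Adj x y) = G.neighborFinset x := by
    ext y; simp
  rw [h1]
  have := hreg x
  rw [SimpleGraph.degree] at this
  exact_mod_cast congrArg (fun m : ℕ => (m : ℤ)) this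

lemma sum_F' (hreg : G.IsRegularOfDegree r) (y : V) : ∑ x, F G x y = (r : ℤ) := by
  have : ∀ x, F G x y = F G y x := fun x => F_symm G x y
  simp only [this]
  exact sum_F hreg y

lemma sum_D (a : V) : ∑ y, D a y = (Fintype.card V : ℤ) - 1 := by
  have h : ∀ y : V, D a y = 1 - (if a = y then (1 : ℤ) else 0) := by
    intro y; unfold D; split_ifs <;> ring
  simp only [h, Finset.sum_sub_distrib, Finset.sum_const, Finset.sum_ite_eq, mem_univ,
    if_true, Finset.card_univ, nsmul_eq_mul, mul_one]

lemma sum_D_F (hreg : G.IsRegularOfDegree r) (a b : V) :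
    ∑ y, D a y * F G b y = (r : ℤ) - F G b a := by
  have h : ∀ y : V, D a y * F G b y = F G b y - (if a = y then F G b a else 0) := by
    intro y; unfold D
    by_cases hy : a = y
    · subst hy; simp
    · simp [hy]
  simp only [h, Finset.sum_sub_distrib, Finset.sum_ite_eq, mem_univ, if_true,
    sum_F hreg]

lemma sum_D_F' (hreg : G.IsRegularOfDegree r) (a b : V) :
    ∑ x, D a x * F G x b = (r : ℤ) - F G a b := by
  have h : ∀ x, F G x b = F G b x := fun x => F_symm G x b
  simp only [h]
  rw [sum_D_F hreg a b, F_symm]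

lemma sum_D_D (a : V) (x : V) :
    ∑ y, D a y * D x y = ((Fintype.card V : ℤ) - 2) + (if x = a then 1 else 0) := by
  by_cases hxa : x = a
  · subst hxa
    have h : ∀ y : V, D x y * D x y = D x y := by
      intro y; unfold D; split_ifs <;> ring
    simp only [h, sum_D]
    norm_num
    ring
  · have h : ∀ y : V, D a y * D x y =
        1 - (if a = y then (1:ℤ) else 0) - (if x = y then (1:ℤ) else 0) := by
      intro y; unfold D
      by_cases h1 : a = y
      · subst h1
        have : x ≠ a := hxa
        simp [this]
      · by_cases h2 : x = y
        · subst h2; simp [h1]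
        · simp [h1, h2]
    simp only [h, Finset.sum_sub_distrib, Finset.sum_const, Finset.sum_ite_eq, mem_univ,
      if_true, Finset.card_univ, nsmul_eq_mul, mul_one, if_neg hxa]
    ring

end Sums

section PairCount

variable (G : SimpleGraph V) [DecidableRel G.Adj]

lemma pair_card (v : V) :
    ((univ : Finset (V × V)).filter
      (fun p => G.Adj v p.1 ∧ G.Adj v p.2 ∧ G.Adj p.1 p.2)).card = 2 * K3deg G v := by
  classical
  have hmem : ∀ p ∈ (univ : Finset (V × V)).filter
      (fun p => G.Adj v p.1 ∧ G.Adj v p.2 ∧ G.Adj p.1 p.2),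
      ({v, p.1, p.2} : Finset V) ∈ (G.cliqueFinset 3).filter (fun t => v ∈ t) := by
    intro p hp
    simp only [mem_filter, mem_univ, true_and] at hp
    obtain ⟨h1, h2, h3⟩ := hp
    refine mem_filter.2 ⟨?_, ?_⟩
    · rw [SimpleGraph.mem_cliqueFinset_iff, SimpleGraph.is3Clique_triple_iff]
      exact ⟨h1, h2, h3⟩
    · simp
  rw [Finset.card_eq_sum_card_fiberwise hmem]
  rw [K3deg]
  rw [Finset.sum_congr rfl (fun t ht => ?_), Finset.sum_const, smul_eq_mul, mul_comm]
  -- show each fiber has two elements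
  simp only [mem_filter, SimpleGraph.mem_cliqueFinset_iff] at ht
  obtain ⟨hcl, hv⟩ := ht
  have hcard : t.card = 3 := hcl.2
  have h2 : (t.erase v).card = 2 := by rw [Finset.card_erase_of_mem hv, hcard]
  obtain ⟨x, y, hxy, hxyt⟩ := Finset.card_eq_two.mp h2
  have hxt : x ∈ t.erase v := by rw [hxyt]; simp
  have hyt : y ∈ t.erase v := by rw [hxyt]; simp
  have hxv : x ≠ v := (Finset.mem_erase.mp hxt).1
  have hyv : y ≠ v := (Finset.mem_erase.mp hyt).1
  have hxT : x ∈ t := (Finset.mem_erase.mp hxt).2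
  have hyT : y ∈ t := (Finset.mem_erase.mp hyt).2
  have hvx : G.Adj v x := hcl.1 (by simpa using hv) (by simpa using hxT) (Ne.symm hxv)
  have hvy : G.Adj v y := hcl.1 (by simpa using hv) (by simpa using hyT) (Ne.symm hyv)
  have hxy' : G.Adj x y := hcl.1 (by simpa using hxT) (by simpa using hyT) hxy
  have hins : ({v, x, y} : Finset V) = t := by
    have : ({v, x, y} : Finset V) = insert v (t.erase v) := by rw [hxyt]
    rw [this, Finset.insert_erase hv]
  have hfib : ((univ : Finset (V × V)).filter
      (fun p => G.Adj v p.1 ∧ G.Adj v p.2 ∧ G.Adj p.1 p.2)).filter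
      (fun p => ({v, p.1, p.2} : Finset V) = t) = {(x, y), (y, x)} := by
    ext p
    simp only [mem_filter, mem_univ, true_and, mem_insert, mem_singleton]
    constructor
    · rintro ⟨⟨a1, a2, a3⟩, heq⟩
      have hp1 : p.1 ∈ t.erase v := by
        rw [← heq]
        exact Finset.mem_erase.2 ⟨a1.ne', by simp⟩
      have hp2 : p.2 ∈ t.erase v := by
        rw [← heq]
        exact Finset.mem_erase.2 ⟨a2.ne', by simp⟩
      rw [hxyt] at hp1 hp2
      simp only [mem_insert, mem_singleton] at hp1 hp2
      have hne : p.1 ≠ p.2 := a3.ne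
      rcases hp1 with h1 | h1 <;> rcases hp2 with h2 | h2
      · exact absurd (h1.trans h2.symm) hne
      · left; exact Prod.ext h1 h2
      · right; exact Prod.ext h1 h2
      · exact absurd (h1.trans h2.symm) hne
    · rintro (rfl | rfl)
      · exact ⟨⟨hvx, hvy, hxy'⟩, hins⟩
      · refine ⟨⟨hvy, hvx, hxy'.symm⟩, ?_⟩
        rw [← hins]
        simp only []
        ext z
        simp only [mem_insert, mem_singleton]
        tauto
  rw [hfib]
  rw [Finset.card_insert_of_notMem, Finset.card_singleton]
  simp only [mem_singleton, Prod.mk.injEq, not_and]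
  intro h; exact absurd h hxy

lemma t3_eq (v : V) :
    ((2 * K3deg G v : ℕ) : ℤ) = ∑ x, ∑ y, F G v x * F G v y * F G x y := by
  rw [← pair_card G v]
  rw [← Fintype.sum_prod_type']
  have h : ∀ p : V × V, F G v p.1 * F G v p.2 * F G p.1 p.2 =
      if G.Adj v p.1 ∧ G.Adj v p.2 ∧ G.Adj p.1 p.2 then (1 : ℤ) else 0 := by
    intro p; unfold F; split_ifs <;> simp_all
  simp only [h]
  rw [Finset.sum_boole]

end PairCount

section Identity

variable {G : SimpleGraph V} [DecidableRel G.Adj] {r : ℕ}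

lemma S1 (hreg : G.IsRegularOfDegree r) (v : V) :
    ∑ x, ∑ y, D (V := V) v x * D v y * D x y =
      ((Fintype.card V : ℤ) - 1) * ((Fintype.card V : ℤ) - 2) := by
  have inner : ∀ x : V, ∑ y, D v x * D v y * D x y = D v x * ((Fintype.card V : ℤ) - 2) := by
    intro x
    simp only [mul_assoc]
    rw [← Finset.mul_sum, sum_D_D v x]
    by_cases hx : x = v
    · subst hx; simp [D]
    · rw [if_neg hx]; ring
  rw [Finset.sum_congr rfl (fun x _ => inner x), ← Finset.sum_mul, sum_D]

lemma S2 (hreg : G.IsRegularOfDegree r) (v : V) :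
    ∑ x, ∑ y, D (V := V) v x * D v y * F G x y =
      ((Fintype.card V : ℤ) - 1) * r - r := by
  have inner : ∀ x : V, ∑ y, D v x * D v y * F G x y = D v x * ((r : ℤ) - F G x v) := by
    intro x
    simp only [mul_assoc]
    rw [← Finset.mul_sum, sum_D_F hreg v x]
  rw [Finset.sum_congr rfl (fun x _ => inner x)]
  have h : ∀ x : V, D v x * ((r : ℤ) - F G x v) = D v x * r - F G x v := by
    intro x
    by_cases hx : v = x
    · subst hx; simp [D, F_self]
    · simp [D, hx]
  simp only [h, Finset.sum_sub_distrib, ← Finset.sum_mul, sum_D, sum_F' hreg]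

lemma S3 (hreg : G.IsRegularOfDegree r) (v : V) :
    ∑ x, ∑ y, D (V := V) v x * F G v y * D x y =
      ((Fintype.card V : ℤ) - 1) * r - r := by
  have inner : ∀ x : V, ∑ y, D v x * F G v y * D x y = D v x * ((r : ℤ) - F G v x) := by
    intro x
    have hc : ∀ y : V, D v x * F G v y * D x y = D v x * (D x y * F G v y) := by
      intro y; ring
    simp only [hc]
    rw [← Finset.mul_sum, sum_D_F hreg x v]
  rw [Finset.sum_congr rfl (fun x _ => inner x)]
  have h : ∀ x : V, D v x * ((r : ℤ) - F G v x) = D v x * r - F G v x := by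
    intro x
    by_cases hx : v = x
    · subst hx; simp [D, F_self]
    · simp [D, hx]
  simp only [h, Finset.sum_sub_distrib, ← Finset.sum_mul, sum_D, sum_F hreg]

lemma S4 (hreg : G.IsRegularOfDegree r) (v : V) :
    ∑ x, ∑ y, D (V := V) v x * F G v y * F G x y = (r : ℤ) * r - r := by
  rw [Finset.sum_comm]
  have inner : ∀ y : V, ∑ x, D v x * F G v y * F G x y = F G v y * ((r : ℤ) - F G v y) := by
    intro y
    have hc : ∀ x : V, D v x * F G v y * F G x y = F G v y * (D v x * F G x y) := by
      intro x; ring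
    simp only [hc]
    rw [← Finset.mul_sum, sum_D_F' hreg v y]
  rw [Finset.sum_congr rfl (fun y _ => inner y)]
  have h : ∀ y : V, F G v y * ((r : ℤ) - F G v y) = F G v y * r - F G v y := by
    intro y
    have := F_sq G v y
    nlinarith [F_sq G v y]
  simp only [h, Finset.sum_sub_distrib, ← Finset.sum_mul, sum_F hreg]

lemma S5 (hreg : G.IsRegularOfDegree r) (v : V) :
    ∑ x, ∑ y, F G v x * D (V := V) v y * D x y =
      (r : ℤ) * ((Fintype.card V : ℤ) - 2) := by
  have inner : ∀ x : V, ∑ y, F G v x * D v y * D x y =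
      F G v x * ((Fintype.card V : ℤ) - 2) := by
    intro x
    simp only [mul_assoc]
    rw [← Finset.mul_sum, sum_D_D v x]
    by_cases hx : x = v
    · subst hx; simp [F_self]
    · rw [if_neg hx]; ring
  rw [Finset.sum_congr rfl (fun x _ => inner x), ← Finset.sum_mul, sum_F hreg]

lemma S6 (hreg : G.IsRegularOfDegree r) (v : V) :
    ∑ x, ∑ y, F G v x * D (V := V) v y * F G x y = (r : ℤ) * r - r := by
  have inner : ∀ x : V, ∑ y, F G v x * D v y * F G x y = F G v x * ((r : ℤ) - F G x v) := by
    intro x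
    simp only [mul_assoc]
    rw [← Finset.mul_sum, sum_D_F hreg v x]
  rw [Finset.sum_congr rfl (fun x _ => inner x)]
  have h : ∀ x : V, F G v x * ((r : ℤ) - F G x v) = F G v x * r - F G v x := by
    intro x
    rw [← F_symm G v x]
    nlinarith [F_sq G v x]
  simp only [h, Finset.sum_sub_distrib, ← Finset.sum_mul, sum_F hreg]

lemma S7 (hreg : G.IsRegularOfDegree r) (v : V) :
    ∑ x, ∑ y, F G v x * F G v y * D x y = (r : ℤ) * r - r := by
  have inner : ∀ x : V, ∑ y, F G v x * F G v y * D x y = F G v x * ((r : ℤ) - F G v x) := by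
    intro x
    have hc : ∀ y : V, F G v x * F G v y * D x y = F G v x * (D x y * F G v y) := by
      intro y; ring
    simp only [hc]
    rw [← Finset.mul_sum, sum_D_F hreg x v]
  rw [Finset.sum_congr rfl (fun x _ => inner x)]
  have h : ∀ x : V, F G v x * ((r : ℤ) - F G v x) = F G v x * r - F G v x := by
    intro x
    nlinarith [F_sq G v x]
  simp only [h, Finset.sum_sub_distrib, ← Finset.sum_mul, sum_F hreg]

lemma identity (hreg : G.IsRegularOfDegree r) (v : V) :
    ((2 * K3deg G v : ℕ) : ℤ) + ((2 * K3deg Gᶜ v : ℕ) : ℤ) =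
      ((Fintype.card V : ℤ) - 1) * ((Fintype.card V : ℤ) - 2)
        - 2 * (((Fintype.card V : ℤ) - 1) * r - r)
        - (r : ℤ) * ((Fintype.card V : ℤ) - 2) + 3 * ((r : ℤ) * r - r) := by
  rw [t3_eq G v, t3_eq Gᶜ v]
  have expand : ∀ x y : V, F Gᶜ v x * F Gᶜ v y * F Gᶜ x y =
      D v x * D v y * D x y - D v x * D v y * F G x y - D v x * F G v y * D x y
        + D v x * F G v y * F G x y - F G v x * D v y * D x y + F G v x * D v y * F G x y
        + F G v x * F G v y * D x y - F G v x * F G v y * F G x y := by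
    intro x y
    rw [Fc G v x, Fc G v y, Fc G x y]
    ring
  have step : ∑ x, ∑ y, F Gᶜ v x * F Gᶜ v y * F Gᶜ x y =
      (∑ x, ∑ y, D (V := V) v x * D v y * D x y)
        - (∑ x, ∑ y, D (V := V) v x * D v y * F G x y)
        - (∑ x, ∑ y, D (V := V) v x * F G v y * D x y)
        + (∑ x, ∑ y, D (V := V) v x * F G v y * F G x y)
        - (∑ x, ∑ y, F G v x * D (V := V) v y * D x y)
        + (∑ x, ∑ y, F G v x * D (V := V) v y * F G x y)
        + (∑ x, ∑ y, F G v x * F G v y * D x y)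
        - (∑ x, ∑ y, F G v x * F G v y * F G x y) := by
    rw [Finset.sum_congr rfl (fun x _ => Finset.sum_congr rfl (fun y _ => expand x y))]
    simp only [Finset.sum_add_distrib, Finset.sum_sub_distrib]
  rw [step, S1 hreg v, S2 hreg v, S3 hreg v, S4 hreg v, S5 hreg v, S6 hreg v, S7 hreg v]
  ring

end Identity

end K3aux

theorem stmt1 {V : Type*} [Fintype V] [DecidableEq V] (G : SimpleGraph V) [DecidableRel G.Adj]
    (hreg : ∃ r : ℕ, G.IsRegularOfDegree r)
    (hirr : ∀ u w : V, K3deg G u = K3deg G w → u = w) :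
    (∃ s : ℕ, Gᶜ.IsRegularOfDegree s) ∧ (∀ u w : V, K3deg Gᶜ u = K3deg Gᶜ w → u = w) := by
  obtain ⟨r, hr⟩ := hreg
  constructor
  · exact ⟨Fintype.card V - 1 - r, hr.compl⟩
  · intro u w h
    apply hirr
    have hu := K3aux.identity hr u
    have hw := K3aux.identity hr w
    have : ((2 * K3deg G u : ℕ) : ℤ) = ((2 * K3deg G w : ℕ) : ℤ) := by
      rw [h] at hu
      linarith
    have h2 : 2 * K3deg G u = 2 * K3deg G w := by exact_mod_cast this
    omega
end

section
/- Let G be an r-regular K3-irregular simple graph, let v be a vertex of G with K3-degree d, and let A = N(v) be the neighborhood of v. Then every vertex a ∈ A has at most min(r − 2, d) neighbors inside A. -/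
open Finset

theorem stmt4 {V : Type*} [Fintype V] [DecidableEq V] (G : SimpleGraph V) [DecidableRel G.Adj]
    (r : ℕ) (hreg : G.IsRegularOfDegree r)
    (hirr : ∀ u w : V, K3deg G u = K3deg G w → u = w)
    (v : V) (d : ℕ) (hd : K3deg G v = d)
    (A : Finset V) (hA : A = G.neighborFinset v)
    (a : V) (ha : a ∈ A) :
    ((G.neighborFinset a ∩ A).card : ℤ) ≤ min ((r : ℤ) - 2) (d : ℤ) := by
  subst hA hd
  have hav : G.Adj v a := by rwa [SimpleGraph.mem_neighborFinset] at ha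
  -- Bound 1 : card ≤ d
  have h1 : (G.neighborFinset a ∩ G.neighborFinset v).card ≤ K3deg G v := by
    apply Finset.card_le_card_of_injOn (fun b => ({v, a, b} : Finset V))
    · intro b hb
      rw [Finset.mem_coe, Finset.mem_inter, SimpleGraph.mem_neighborFinset,
        SimpleGraph.mem_neighborFinset] at hb
      simp only [K3deg, Finset.mem_coe, Finset.mem_filter]
      refine ⟨?_, by simp⟩
      rw [SimpleGraph.mem_cliqueFinset_iff, SimpleGraph.is3Clique_triple_iff]
      exact ⟨hav, hb.2, hb.1⟩
    · intro b hb b' hb' heq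
      rw [Finset.mem_coe, Finset.mem_inter, SimpleGraph.mem_neighborFinset,
        SimpleGraph.mem_neighborFinset] at hb
      have hbv : b ≠ v := fun h => G.irrefl (h ▸ hb.2)
      have hba : b ≠ a := fun h => G.irrefl (h ▸ hb.1)
      simp only at heq
      have hmem : b ∈ ({v, a, b'} : Finset V) := by
        rw [← heq]; simp
      simp only [Finset.mem_insert, Finset.mem_singleton] at hmem
      rcases hmem with h | h | h
      · exact absurd h hbv
      · exact absurd h hba
      · exact h
  -- Bound 2 : card + 2 ≤ r
  have hvNa : v ∈ G.neighborFinset a := by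
    rw [SimpleGraph.mem_neighborFinset]; exact hav.symm
  have hvnot : v ∉ G.neighborFinset a ∩ G.neighborFinset v := by
    simp
  have hsub : insert v (G.neighborFinset a ∩ G.neighborFinset v) ⊆ G.neighborFinset a := by
    intro x hx
    rcases Finset.mem_insert.mp hx with h | h
    · exact h ▸ hvNa
    · exact (Finset.mem_inter.mp h).1
  have hle : (G.neighborFinset a ∩ G.neighborFinset v).card + 1 ≤ r := by
    have := Finset.card_le_card hsub
    rwa [Finset.card_insert_of_notMem hvnot, SimpleGraph.card_neighborFinset_eq_degree, hreg a] at this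
  have hne : (G.neighborFinset a ∩ G.neighborFinset v).card + 1 ≠ r := by
    intro hc
    have heq : insert v (G.neighborFinset a ∩ G.neighborFinset v) = G.neighborFinset a :=
      Finset.eq_of_subset_of_card_le hsub
        (by rw [Finset.card_insert_of_notMem hvnot, hc, SimpleGraph.card_neighborFinset_eq_degree, hreg a])
    have hva : v ≠ a := G.ne_of_adj hav
    -- forward: Adj a x → x ≠ v → Adj v x
    have hfwd : ∀ x, x ≠ v → G.Adj a x → G.Adj v x := by
      intro x hxv hax
      have : x ∈ insert v (G.neighborFinset a ∩ G.neighborFinset v) := by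
        rw [heq, SimpleGraph.mem_neighborFinset]; exact hax
      rcases Finset.mem_insert.mp this with h | h
      · exact absurd h hxv
      · exact (SimpleGraph.mem_neighborFinset _ _ _).mp (Finset.mem_inter.mp h).2
    -- erase sets
    have hSsubT : (G.neighborFinset a).erase v ⊆ (G.neighborFinset v).erase a := by
      intro x hx
      rw [Finset.mem_erase, SimpleGraph.mem_neighborFinset] at hx
      rw [Finset.mem_erase, SimpleGraph.mem_neighborFinset]
      exact ⟨(G.ne_of_adj hx.2).symm, hfwd x hx.1 hx.2⟩
    have hST : (G.neighborFinset a).erase v = (G.neighborFinset v).erase a :=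
      Finset.eq_of_subset_of_card_le hSsubT (by
        rw [Finset.card_erase_of_mem hvNa, Finset.card_erase_of_mem ha, SimpleGraph.card_neighborFinset_eq_degree, SimpleGraph.card_neighborFinset_eq_degree, hreg a, hreg v])
    have hflip : ∀ x, x ≠ v → x ≠ a → (G.Adj a x ↔ G.Adj v x) := by
      intro x hxv hxa
      constructor
      · exact hfwd x hxv
      · intro hvx
        have : x ∈ (G.neighborFinset v).erase a := by
          rw [Finset.mem_erase, SimpleGraph.mem_neighborFinset]; exact ⟨hxa, hvx⟩
        rw [← hST, Finset.mem_erase, SimpleGraph.mem_neighborFinset] at this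
        exact this.2
    have hswap : ∀ x y, G.Adj x y → G.Adj (Equiv.swap a v x) (Equiv.swap a v y) := by
      have key : ∀ y, y ≠ a → y ≠ v → G.Adj a y → G.Adj (Equiv.swap a v a) (Equiv.swap a v y) := by
        intro y hya hyv hxy
        rw [Equiv.swap_apply_left, Equiv.swap_apply_of_ne_of_ne hya hyv]
        exact hfwd y hyv hxy
      have key2 : ∀ y, y ≠ a → y ≠ v → G.Adj v y → G.Adj (Equiv.swap a v v) (Equiv.swap a v y) := by
        intro y hya hyv hxy
        rw [Equiv.swap_apply_right, Equiv.swap_apply_of_ne_of_ne hya hyv]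
        exact (hflip y hyv hya).mpr hxy
      have hav2 : G.Adj (Equiv.swap a v a) (Equiv.swap a v v) := by
        rw [Equiv.swap_apply_left, Equiv.swap_apply_right]
        exact hav
      intro x y hxy
      obtain hxa | hxa := eq_or_ne x a
      · subst hxa
        obtain hyv | hyv := eq_or_ne y v
        · subst hyv; exact hav2
        · exact key y (fun h => G.irrefl (by rwa [h] at hxy)) hyv hxy
      · obtain hxv | hxv := eq_or_ne x v
        · subst hxv
          obtain hya | hya := eq_or_ne y a
          · subst hya; exact hav2.symm
          · exact key2 y hya (fun h => G.irrefl (by rwa [h] at hxy)) hxy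
        · rw [Equiv.swap_apply_of_ne_of_ne hxa hxv]
          obtain hya | hya := eq_or_ne y a
          · subst hya
            have h := (key x hxa hxv hxy.symm).symm
            rwa [Equiv.swap_apply_of_ne_of_ne hxa hxv] at h
          · obtain hyv | hyv := eq_or_ne y v
            · subst hyv
              have h := (key2 x hxa hxv hxy.symm).symm
              rwa [Equiv.swap_apply_of_ne_of_ne hxa hxv] at h
            · rw [Equiv.swap_apply_of_ne_of_ne hya hyv]
              exact hxy
    have himgc : ∀ t : Finset V, t ∈ G.cliqueFinset 3 →
        t.image (Equiv.swap a v) ∈ G.cliqueFinset 3 := by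
      intro t ht
      rw [SimpleGraph.mem_cliqueFinset_iff, SimpleGraph.isNClique_iff] at ht ⊢
      refine ⟨?_, ?_⟩
      · intro p hp q hq hpq
        simp only [Finset.coe_image, Set.mem_image, Finset.mem_coe] at hp hq
        obtain ⟨p', hp', rfl⟩ := hp
        obtain ⟨q', hq', rfl⟩ := hq
        have hne : p' ≠ q' := fun h => hpq (by rw [h])
        exact hswap p' q' (ht.1 hp' hq' hne)
      · rw [Finset.card_image_of_injective _ (Equiv.injective _)]
        exact ht.2
    have hmono : ∀ x : V, ((G.cliqueFinset 3).filter (fun t => x ∈ t)).card ≤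
        ((G.cliqueFinset 3).filter (fun t => Equiv.swap a v x ∈ t)).card := by
      intro x
      apply Finset.card_le_card_of_injOn (fun t => t.image (Equiv.swap a v))
      · intro t ht
        rw [Finset.mem_coe, Finset.mem_filter] at ht ⊢
        exact ⟨himgc t ht.1, Finset.mem_image_of_mem _ ht.2⟩
      · intro t _ t' _ h
        exact Finset.image_injective (Equiv.injective _) h
    have hKeq : K3deg G a = K3deg G v := by
      unfold K3deg
      apply le_antisymm
      · have := hmono a
        rwa [Equiv.swap_apply_left] at this
      · have := hmono v
        rwa [Equiv.swap_apply_right] at this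
    exact G.irrefl (by rwa [hirr a v hKeq] at hav)
  have h2 : (G.neighborFinset a ∩ G.neighborFinset v).card + 2 ≤ r := by omega
  rw [le_min_iff]
  constructor
  · omega
  · exact_mod_cast h1
end

section
/- Let G be an r-regular K3-irregular simple graph and let v be a vertex of G with neighborhood A = N(v). Then for every a ∈ A there exists a' ∈ A with a' ≠ a such that a and a' are not adjacent in G (i.e., the complement of the subgraph induced on A has no isolated vertices). -/
theorem stmt5 {V : Type*} [Fintype V] [DecidableEq V] (G : SimpleGraph V) [DecidableRel G.Adj]
    (r : ℕ) (hreg : G.IsRegularOfDegree r)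
    (hirr : ∀ u w : V, K3deg G u = K3deg G w → u = w)
    (v : V) (A : Finset V) (hA : A = G.neighborFinset v)
    (a : V) (ha : a ∈ A) :
    ∃ a' ∈ A, a' ≠ a ∧ ¬ G.Adj a a' := by
  by_contra hcon
  push_neg at hcon
  subst hA
  have hav : G.Adj v a := (SimpleGraph.mem_neighborFinset G v a).mp ha
  have hne : a ≠ v := fun h => G.irrefl (h ▸ hav)
  have hvA : v ∉ G.neighborFinset v := by simp
  have hsub : insert v ((G.neighborFinset v).erase a) ⊆ G.neighborFinset a := by
    intro x hx
    rw [Finset.mem_insert] at hx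
    rcases hx with rfl | hx
    · exact (SimpleGraph.mem_neighborFinset G a x).mpr hav.symm
    · rw [Finset.mem_erase] at hx
      exact (SimpleGraph.mem_neighborFinset G a x).mpr (hcon x hx.2 hx.1)
  have hcard : (insert v ((G.neighborFinset v).erase a)).card = r := by
    rw [Finset.card_insert_of_notMem (fun h => hvA (Finset.mem_of_mem_erase h)),
      Finset.card_erase_of_mem ha, SimpleGraph.card_neighborFinset_eq_degree, hreg v]
    have hrpos : 0 < r := by
      have := Finset.card_pos.mpr ⟨a, ha⟩
      rwa [SimpleGraph.card_neighborFinset_eq_degree, hreg v] at this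
    omega
  have hNeq : insert v ((G.neighborFinset v).erase a) = G.neighborFinset a := by
    apply Finset.eq_of_subset_of_card_le hsub
    rw [hcard, SimpleGraph.card_neighborFinset_eq_degree, hreg a]
  have hNa : ∀ x : V, G.Adj a x → x = v ∨ (x ∈ G.neighborFinset v ∧ x ≠ a) := by
    intro x hx
    have hx' : x ∈ G.neighborFinset a := (SimpleGraph.mem_neighborFinset G a x).mpr hx
    rw [← hNeq, Finset.mem_insert, Finset.mem_erase] at hx'
    tauto
  set σ := Equiv.swap a v with hσ
  have hσa : σ a = v := Equiv.swap_apply_left a v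
  have hσv : σ v = a := Equiv.swap_apply_right a v
  have hσo : ∀ x : V, x ≠ a → x ≠ v → σ x = x := fun x h1 h2 =>
    Equiv.swap_apply_of_ne_of_ne h1 h2
  -- adjacency is preserved under σ, for pairs in a clique containing a
  have fwd : ∀ x y : V, x ≠ y → G.Adj x y → (x = a ∨ G.Adj a x) → (y = a ∨ G.Adj a y) →
      G.Adj (σ x) (σ y) := by
    intro x y hxy hadj hx hy
    by_cases hxa : x = a
    · have hya : y ≠ a := fun h => hxy (hxa.trans h.symm)
      have hay : G.Adj a y := hxa ▸ hadj
      by_cases hyv : y = v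
      · rw [hxa, hyv, hσa, hσv]; exact hav
      · rcases hNa y hay with h | ⟨hyA, _⟩
        · exact absurd h hyv
        · rw [hxa, hσa, hσo y hya hyv]
          exact (SimpleGraph.mem_neighborFinset G v y).mp hyA
    · by_cases hya : y = a
      · have hax : G.Adj a x := hya ▸ hadj.symm
        by_cases hxv : x = v
        · rw [hxv, hya, hσa, hσv]; exact hav.symm
        · rcases hNa x hax with h | ⟨hxA, _⟩
          · exact absurd h hxv
          · rw [hya, hσa, hσo x hxa hxv]
            exact ((SimpleGraph.mem_neighborFinset G v x).mp hxA).symm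
      · have hax : G.Adj a x := by
          rcases hx with h | h
          · exact absurd h hxa
          · exact h
        have hay : G.Adj a y := by
          rcases hy with h | h
          · exact absurd h hya
          · exact h
        by_cases hxv : x = v
        · have hyv : y ≠ v := fun h => hxy (hxv.trans h.symm)
          rw [hxv, hσv, hσo y hya hyv]
          exact hay
        · by_cases hyv : y = v
          · rw [hyv, hσv, hσo x hxa hxv]
            exact hax.symm
          · rw [hσo x hxa hxv, hσo y hya hyv]
            exact hadj
  -- adjacency is preserved under σ, for pairs in a clique containing v
  have bwd : ∀ x y : V, x ≠ y → G.Adj x y → (x = v ∨ G.Adj v x) → (y = v ∨ G.Adj v y) →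
      G.Adj (σ x) (σ y) := by
    intro x y hxy hadj hx hy
    by_cases hxv : x = v
    · have hyv : y ≠ v := fun h => hxy (hxv.trans h.symm)
      have hvy : G.Adj v y := hxv ▸ hadj
      by_cases hya : y = a
      · rw [hxv, hya, hσv, hσa]; exact hav.symm
      · rw [hxv, hσv, hσo y hya hyv]
        exact hcon y ((SimpleGraph.mem_neighborFinset G v y).mpr hvy) hya
    · by_cases hyv : y = v
      · have hvx : G.Adj v x := hyv ▸ hadj.symm
        by_cases hxa : x = a
        · rw [hxa, hyv, hσa, hσv]; exact hav
        · rw [hyv, hσv, hσo x hxa hxv]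
          exact (hcon x ((SimpleGraph.mem_neighborFinset G v x).mpr hvx) hxa).symm
      · have hvx : G.Adj v x := by
          rcases hx with h | h
          · exact absurd h hxv
          · exact h
        have hvy : G.Adj v y := by
          rcases hy with h | h
          · exact absurd h hyv
          · exact h
        by_cases hxa : x = a
        · have hya : y ≠ a := fun h => hxy (hxa.trans h.symm)
          rw [hxa, hσa, hσo y hya hyv]
          exact hvy
        · by_cases hya : y = a
          · rw [hya, hσa, hσo x hxa hxv]
            exact hvx.symm
          · rw [hσo x hxa hxv, hσo y hya hyv]
            exact hadj
  -- K3deg a = K3deg v via the bijection t ↦ t.image σ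
  have key : K3deg G a = K3deg G v := by
    unfold K3deg
    refine Finset.card_bij' (fun t _ => t.image σ) (fun t _ => t.image σ)
      ?_ ?_ ?_ ?_
    · intro t ht
      rw [Finset.mem_filter, SimpleGraph.mem_cliqueFinset_iff] at ht ⊢
      obtain ⟨⟨hcl, hc3⟩, hat⟩ := ht
      refine ⟨⟨?_, ?_⟩, ?_⟩
      · rw [Finset.coe_image]
        rintro x hx y hy hxy
        obtain ⟨x0, hx0, rfl⟩ := hx
        obtain ⟨y0, hy0, rfl⟩ := hy
        have hx0y0 : x0 ≠ y0 := fun h => hxy (by rw [h])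
        exact fwd x0 y0 hx0y0 (hcl hx0 hy0 hx0y0)
          (by by_cases h : x0 = a
              · exact Or.inl h
              · exact Or.inr (hcl hat hx0 (fun h' => h h'.symm)))
          (by by_cases h : y0 = a
              · exact Or.inl h
              · exact Or.inr (hcl hat hy0 (fun h' => h h'.symm)))
      · rw [Finset.card_image_of_injective t σ.injective, hc3]
      · rw [← hσa]
        exact Finset.mem_image_of_mem σ hat
    · intro t ht
      rw [Finset.mem_filter, SimpleGraph.mem_cliqueFinset_iff] at ht ⊢
      obtain ⟨⟨hcl, hc3⟩, hvt⟩ := ht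
      refine ⟨⟨?_, ?_⟩, ?_⟩
      · rw [Finset.coe_image]
        rintro x hx y hy hxy
        obtain ⟨x0, hx0, rfl⟩ := hx
        obtain ⟨y0, hy0, rfl⟩ := hy
        have hx0y0 : x0 ≠ y0 := fun h => hxy (by rw [h])
        exact bwd x0 y0 hx0y0 (hcl hx0 hy0 hx0y0)
          (by by_cases h : x0 = v
              · exact Or.inl h
              · exact Or.inr (hcl hvt hx0 (fun h' => h h'.symm)))
          (by by_cases h : y0 = v
              · exact Or.inl h
              · exact Or.inr (hcl hvt hy0 (fun h' => h h'.symm)))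
      · rw [Finset.card_image_of_injective t σ.injective, hc3]
      · rw [← hσv]
        exact Finset.mem_image_of_mem σ hvt
    · intro t _
      show (t.image σ).image σ = t
      rw [Finset.image_image]
      have : ⇑σ ∘ ⇑σ = id := by
        funext x
        simp [hσ, Equiv.swap_apply_self]
      rw [this, Finset.image_id]
    · intro t _
      show (t.image σ).image σ = t
      rw [Finset.image_image]
      have : ⇑σ ∘ ⇑σ = id := by
        funext x
        simp [hσ, Equiv.swap_apply_self]
      rw [this, Finset.image_id]
  exact hne (hirr a v key)
end

section
/- Let G be a regular K3-irregular simple graph, let v be a vertex of G, and let B = V(G) \ N[v] be the set of vertices outside the closed neighborhood of v. Then every vertex b ∈ B has at least one neighbor in B (i.e., the subgraph induced on B has no isolated vertices). -/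
lemma map_clique {V : Type*} [Fintype V] [DecidableEq V] (G : SimpleGraph V)
    [DecidableRel G.Adj] {u w : V} (hN : G.neighborFinset u = G.neighborFinset w)
    {t : Finset V} (ht : t ∈ (G.cliqueFinset 3).filter (fun t => u ∈ t)) :
    insert w (t.erase u) ∈ (G.cliqueFinset 3).filter (fun t => w ∈ t) := by
  simp only [Finset.mem_filter, SimpleGraph.mem_cliqueFinset_iff] at ht ⊢
  obtain ⟨⟨hcl, hcard⟩, hu⟩ := ht
  have hsub : ∀ x ∈ t.erase u, x ∈ G.neighborFinset w := by
    intro x hx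
    rw [← hN, SimpleGraph.mem_neighborFinset]
    exact hcl hu (Finset.mem_of_mem_erase hx) (Finset.ne_of_mem_erase hx).symm
  have hwns : w ∉ t.erase u := fun h => by
    have := hsub w h; simp at this
  refine ⟨⟨?_, ?_⟩, Finset.mem_insert_self _ _⟩
  · rw [Finset.coe_insert]
    refine ((hcl.subset ?_).insert ?_)
    · exact_mod_cast Finset.erase_subset u t
    · intro x hx _
      have := hsub x hx
      rw [SimpleGraph.mem_neighborFinset] at this
      exact this
  · rw [Finset.card_insert_of_notMem hwns, Finset.card_erase_of_mem hu, hcard]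

lemma notMem_erase_self {V : Type*} [Fintype V] [DecidableEq V] (G : SimpleGraph V)
    [DecidableRel G.Adj] {u w : V} (hN : G.neighborFinset u = G.neighborFinset w)
    {t : Finset V} (ht : t ∈ (G.cliqueFinset 3).filter (fun t => u ∈ t)) :
    w ∉ t.erase u := by
  simp only [Finset.mem_filter, SimpleGraph.mem_cliqueFinset_iff] at ht
  obtain ⟨⟨hcl, hcard⟩, hu⟩ := ht
  intro h
  have : w ∈ G.neighborFinset u := by
    rw [SimpleGraph.mem_neighborFinset]
    exact hcl hu (Finset.mem_of_mem_erase h) (Finset.ne_of_mem_erase h).symm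
  rw [hN, SimpleGraph.mem_neighborFinset] at this
  exact this.ne rfl

lemma k3_eq {V : Type*} [Fintype V] [DecidableEq V] (G : SimpleGraph V)
    [DecidableRel G.Adj] {u w : V} (hN : G.neighborFinset u = G.neighborFinset w) :
    K3deg G u = K3deg G w := by
  unfold K3deg
  refine Finset.card_bij' (fun t _ => insert w (t.erase u)) (fun t _ => insert u (t.erase w))
    (fun t ht => map_clique G hN ht) (fun t ht => map_clique G hN.symm ht) ?_ ?_
  · intro t ht
    show insert u ((insert w (t.erase u)).erase w) = t
    rw [Finset.erase_insert (notMem_erase_self G hN ht),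
      Finset.insert_erase (Finset.mem_filter.mp ht).2]
  · intro t ht
    show insert w ((insert u (t.erase w)).erase u) = t
    rw [Finset.erase_insert (notMem_erase_self G hN.symm ht),
      Finset.insert_erase (Finset.mem_filter.mp ht).2]

theorem stmt6 {V : Type*} [Fintype V] [DecidableEq V] (G : SimpleGraph V) [DecidableRel G.Adj]
    (hreg : ∃ r : ℕ, G.IsRegularOfDegree r)
    (hirr : ∀ u w : V, K3deg G u = K3deg G w → u = w)
    (v : V) (B : Finset V) (hB : B = Finset.univ \ insert v (G.neighborFinset v))
    (b : V) (hb : b ∈ B) :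
    ∃ b' ∈ B, G.Adj b b' := by
  by_contra h
  push_neg at h
  rw [hB, Finset.mem_sdiff, Finset.mem_insert] at hb
  push_neg at hb
  obtain ⟨-, hbv, hbn⟩ := hb
  rw [SimpleGraph.mem_neighborFinset] at hbn
  obtain ⟨r, hr⟩ := hreg
  have hsub : G.neighborFinset b ⊆ G.neighborFinset v := by
    intro x hx
    rw [SimpleGraph.mem_neighborFinset] at hx
    have hxB : x ∉ B := fun hxB => h x hxB hx
    rw [hB, Finset.mem_sdiff] at hxB
    push_neg at hxB
    have := hxB (Finset.mem_univ x)
    rw [Finset.mem_insert] at this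
    rcases this with rfl | hxn
    · exact absurd hx.symm hbn
    · exact hxn
  have heq : G.neighborFinset b = G.neighborFinset v :=
    Finset.eq_of_subset_of_card_le hsub (by
      rw [SimpleGraph.card_neighborFinset_eq_degree, SimpleGraph.card_neighborFinset_eq_degree,
        hr b, hr v])
  exact hbv (hirr b v (k3_eq G heq))
end

section
/- Let G be an r-regular simple graph on n vertices, let v be a vertex of G with K3-degree d, and let B = V(G) \ N[v]. Then |B| = n − r − 1 and twice the number of edges of the subgraph induced on B equals nr − 2r² + 2d. -/
section Aux

open Finset SimpleGraph

variable {V : Type*} [Fintype V] [DecidableEq V] (G : SimpleGraph V) [DecidableRel G.Adj]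

/-- The graph `G` restricted to a vertex set `S`. -/
def restrG (S : Finset V) : SimpleGraph V where
  Adj u w := G.Adj u w ∧ u ∈ S ∧ w ∈ S
  symm := ⟨fun u w ⟨h, hu, hw⟩ => ⟨h.symm, hw, hu⟩⟩
  loopless := ⟨fun u ⟨h, _, _⟩ => G.loopless.irrefl u h⟩

instance restrG.adjDecidable (S : Finset V) : DecidableRel (restrG G S).Adj := fun u w =>
  inferInstanceAs (Decidable (G.Adj u w ∧ u ∈ S ∧ w ∈ S))

lemma restrG_edgeFinset (S : Finset V) :
    (restrG G S).edgeFinset = G.edgeFinset.filter (fun e => e ∈ S.sym2) := by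
  ext e
  induction e using Sym2.ind with
  | _ a b =>
    simp only [mem_edgeFinset, mem_edgeSet, mem_filter, Finset.mk_mem_sym2_iff]
    change (G.Adj a b ∧ a ∈ S ∧ b ∈ S) ↔ _
    tauto

lemma restrG_degree_of_mem {S : Finset V} {u : V} (hu : u ∈ S) :
    (restrG G S).degree u = (G.neighborFinset u ∩ S).card := by
  rw [← card_neighborFinset_eq_degree]
  congr 1
  ext w
  simp only [mem_neighborFinset, mem_inter]
  change (G.Adj u w ∧ u ∈ S ∧ w ∈ S) ↔ _
  tauto

lemma restrG_degree_of_not_mem {S : Finset V} {u : V} (hu : u ∉ S) :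
    (restrG G S).degree u = 0 := by
  rw [← card_neighborFinset_eq_degree, Finset.card_eq_zero]
  ext w
  simp only [mem_neighborFinset, Finset.notMem_empty, iff_false]
  intro h
  exact hu h.2.1

/-- Handshake lemma within a vertex subset `S`. -/
lemma handshake_within (S : Finset V) :
    ∑ u ∈ S, (G.neighborFinset u ∩ S).card
      = 2 * (G.edgeFinset.filter (fun e => e ∈ S.sym2)).card := by
  rw [← restrG_edgeFinset, ← SimpleGraph.sum_degrees_eq_twice_card_edges]
  rw [← Finset.sum_subset (Finset.subset_univ S)
      (fun x _ hx => restrG_degree_of_not_mem G hx)]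
  exact Finset.sum_congr rfl fun u hu => (restrG_degree_of_mem G hu).symm

/-- Edges among the neighbors of `v` are in bijection with triangles containing `v`. -/
lemma card_edges_in_nbhd (v : V) :
    (G.edgeFinset.filter (fun e => e ∈ (G.neighborFinset v).sym2)).card = K3deg G v := by
  classical
  unfold K3deg
  apply Finset.card_bij
    (fun e _ => Sym2.lift ⟨fun a b => insert v {a, b},
      fun a b => by simp only []; rw [Finset.pair_comm]⟩ e)
  · intro e he
    induction e using Sym2.ind with
    | _ a b =>
      simp only [mem_filter, mem_edgeFinset, mem_edgeSet, Finset.mk_mem_sym2_iff,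
        mem_neighborFinset] at he
      obtain ⟨hab, hva, hvb⟩ := he
      simp only [Sym2.lift_mk, mem_filter, mem_cliqueFinset_iff]
      refine ⟨?_, mem_insert_self _ _⟩
      exact SimpleGraph.is3Clique_triple_iff.2 ⟨hva, hvb, hab⟩
  · intro e₁ h₁ e₂ h₂ heq
    induction e₁ using Sym2.ind with
    | _ a b =>
      induction e₂ using Sym2.ind with
      | _ c d =>
        simp only [mem_filter, mem_edgeFinset, mem_edgeSet, Finset.mk_mem_sym2_iff,
          mem_neighborFinset] at h₁ h₂
        simp only [Sym2.lift_mk] at heq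
        have hva : v ≠ a := fun h => G.irrefl (h ▸ h₁.2.1)
        have hvb : v ≠ b := fun h => G.irrefl (h ▸ h₁.2.2)
        have hvc : v ≠ c := fun h => G.irrefl (h ▸ h₂.2.1)
        have hvd : v ≠ d := fun h => G.irrefl (h ▸ h₂.2.2)
        have hab : ({a, b} : Finset V) = {c, d} := by
          have h1 : (insert v ({a, b} : Finset V)).erase v = {a, b} :=
            Finset.erase_insert (by
              simp only [Finset.mem_insert, Finset.mem_singleton]
              exact not_or.mpr ⟨hva, hvb⟩)
          have h2 : (insert v ({c, d} : Finset V)).erase v = {c, d} :=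
            Finset.erase_insert (by
              simp only [Finset.mem_insert, Finset.mem_singleton]
              exact not_or.mpr ⟨hvc, hvd⟩)
          rw [← h1, heq, h2]
        have ha : a = c ∨ a = d := by
          have : a ∈ ({c, d} : Finset V) := hab ▸ (by simp)
          simpa using this
        have hb : b = c ∨ b = d := by
          have : b ∈ ({c, d} : Finset V) := hab ▸ (by simp)
          simpa using this
        have hc : c = a ∨ c = b := by
          have : c ∈ ({a, b} : Finset V) := hab ▸ (by simp)
          simpa using this
        have hdd : d = a ∨ d = b := by
          have : d ∈ ({a, b} : Finset V) := hab ▸ (by simp)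
          simpa using this
        rw [Sym2.eq_iff]
        rcases ha with rfl | rfl <;> rcases hb with rfl | rfl <;> tauto
  · intro t ht
    simp only [mem_filter, mem_cliqueFinset_iff] at ht
    obtain ⟨hcl, hvt⟩ := ht
    obtain ⟨a, b, c, hab, hac, hbc, rfl⟩ := SimpleGraph.is3Clique_iff.1 hcl
    simp only [mem_insert, mem_singleton] at hvt
    rcases hvt with rfl | rfl | rfl
    · refine ⟨s(b, c), ?_, ?_⟩
      · simp only [mem_filter, mem_edgeFinset, mem_edgeSet, Finset.mk_mem_sym2_iff,
          mem_neighborFinset]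
        exact ⟨hbc, hab, hac⟩
      · rfl
    · refine ⟨s(a, c), ?_, ?_⟩
      · simp only [mem_filter, mem_edgeFinset, mem_edgeSet, Finset.mk_mem_sym2_iff,
          mem_neighborFinset]
        exact ⟨hac, hab.symm, hbc⟩
      · simp only [Sym2.lift_mk]
        ext x; simp; tauto
    · refine ⟨s(a, b), ?_, ?_⟩
      · simp only [mem_filter, mem_edgeFinset, mem_edgeSet, Finset.mk_mem_sym2_iff,
          mem_neighborFinset]
        exact ⟨hab, hac.symm, hbc.symm⟩
      · simp only [Sym2.lift_mk]
        ext x; simp; tauto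

end Aux

open Finset SimpleGraph in
theorem stmt8 {V : Type*} [Fintype V] [DecidableEq V] (G : SimpleGraph V) [DecidableRel G.Adj]
    (n r : ℕ) (hn : Fintype.card V = n) (hreg : G.IsRegularOfDegree r)
    (v : V) (d : ℕ) (hd : K3deg G v = d)
    (B : Finset V) (hB : B = Finset.univ \ insert v (G.neighborFinset v)) :
    (B.card : ℤ) = (n : ℤ) - r - 1 ∧
    2 * (((G.edgeFinset.filter (fun e => e ∈ B.sym2)).card : ℤ)) =
      (n : ℤ) * r - 2 * r ^ 2 + 2 * d := by
  classical
  set A : Finset V := G.neighborFinset v with hA_def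
  have hA : A.card = r := hreg v
  have hvA : v ∉ A := G.notMem_neighborFinset_self v
  have hins : (insert v A).card = r + 1 := by
    rw [Finset.card_insert_of_notMem hvA, hA]
  have h_n_ge : r + 1 ≤ n := by
    rw [← hins, ← hn, ← Finset.card_univ]
    exact Finset.card_le_card (Finset.subset_univ _)
  have hBcard : B.card = n - (r + 1) := by
    rw [hB, Finset.card_sdiff_of_subset (Finset.subset_univ _), Finset.card_univ, hn, hins]
  have hcast : (B.card : ℤ) = (n : ℤ) - r - 1 := by
    rw [hBcard, Nat.cast_sub h_n_ge]
    push_cast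
    ring
  refine ⟨hcast, ?_⟩
  -- disjointness facts
  have hvB : ∀ u ∈ B, v ∉ G.neighborFinset u := by
    intro u hu hmem
    rw [hB] at hu
    simp only [Finset.mem_sdiff, Finset.mem_univ, true_and, Finset.mem_insert] at hu
    rw [mem_neighborFinset] at hmem
    exact hu (Or.inr ((G.mem_neighborFinset v u).mpr hmem.symm))
  -- per-vertex split
  have hsplit : ∀ u : V, (G.neighborFinset u ∩ insert v A).card
      + (G.neighborFinset u ∩ B).card = r := by
    intro u
    have h1 : G.neighborFinset u ∩ B = G.neighborFinset u \ insert v A := by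
      rw [hB]; ext w
      simp only [Finset.mem_inter, Finset.mem_sdiff, Finset.mem_univ, true_and]
    rw [h1, Finset.card_inter_add_card_sdiff, card_neighborFinset_eq_degree]
    exact hreg u
  have hsplitB : ∀ u ∈ B, (G.neighborFinset u ∩ A).card
      + (G.neighborFinset u ∩ B).card = r := by
    intro u hu
    have := hsplit u
    rwa [Finset.inter_insert_of_notMem (hvB u hu)] at this
  have hsplitA : ∀ u ∈ A, 1 + (G.neighborFinset u ∩ A).card
      + (G.neighborFinset u ∩ B).card = r := by
    intro u hu
    have hvu : v ∈ G.neighborFinset u := by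
      rw [mem_neighborFinset]
      exact ((G.mem_neighborFinset v u).mp hu).symm
    have := hsplit u
    rw [Finset.inter_insert_of_mem hvu,
      Finset.card_insert_of_notMem (by simp [hvA])] at this
    omega
  -- sums over B
  have hE1 : B.card * r = (∑ u ∈ B, (G.neighborFinset u ∩ A).card)
      + 2 * (G.edgeFinset.filter (fun e => e ∈ B.sym2)).card := by
    rw [← handshake_within, ← Finset.sum_add_distrib]
    rw [Finset.sum_congr rfl hsplitB, Finset.sum_const, smul_eq_mul, mul_comm]
  -- sums over A
  have hE2 : r * r = r + 2 * d + (∑ u ∈ A, (G.neighborFinset u ∩ B).card) := by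
    have h2 : ∑ u ∈ A, (1 + (G.neighborFinset u ∩ A).card
        + (G.neighborFinset u ∩ B).card) = A.card * r := by
      rw [Finset.sum_congr rfl hsplitA, Finset.sum_const, smul_eq_mul, mul_comm]
    rw [hA] at h2
    have h3 : ∑ u ∈ A, (G.neighborFinset u ∩ A).card = 2 * d := by
      rw [handshake_within]
      show 2 * (G.edgeFinset.filter
        (fun e => e ∈ (G.neighborFinset v).sym2)).card = 2 * d
      rw [card_edges_in_nbhd, hd]
    rw [Finset.sum_add_distrib, Finset.sum_add_distrib, Finset.sum_const, smul_eq_mul,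
      mul_one, h3, hA] at h2
    omega
  -- symmetry of the cross count
  have hE3 : (∑ u ∈ A, (G.neighborFinset u ∩ B).card)
      = ∑ u ∈ B, (G.neighborFinset u ∩ A).card := by
    have key : ∀ (S T : Finset V) (u : V), (G.neighborFinset u ∩ T).card
        = ∑ w ∈ T, (if G.Adj u w then 1 else 0) := by
      intro S T u
      have : G.neighborFinset u ∩ T = T.filter (fun w => G.Adj u w) := by
        ext w; simp [mem_neighborFinset, Finset.mem_filter, and_comm]
      rw [this, Finset.card_filter]
    calc ∑ u ∈ A, (G.neighborFinset u ∩ B).card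
        = ∑ u ∈ A, ∑ w ∈ B, (if G.Adj u w then 1 else 0) := by
          exact Finset.sum_congr rfl fun u _ => key A B u
      _ = ∑ w ∈ B, ∑ u ∈ A, (if G.Adj u w then 1 else 0) := Finset.sum_comm
      _ = ∑ w ∈ B, (G.neighborFinset w ∩ A).card := by
          refine Finset.sum_congr rfl fun w _ => ?_
          rw [key B A w]
          exact Finset.sum_congr rfl fun u _ => if_congr (G.adj_comm u w) rfl rfl
  -- assemble
  have hE1' : (B.card : ℤ) * r = (∑ u ∈ B, (G.neighborFinset u ∩ A).card : ℤ)
      + 2 * ((G.edgeFinset.filter (fun e => e ∈ B.sym2)).card : ℤ) := by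
    exact_mod_cast hE1
  have hE2' : (r : ℤ) * r = (r : ℤ) + 2 * d
      + (∑ u ∈ B, (G.neighborFinset u ∩ A).card : ℤ) := by
    rw [hE3] at hE2
    exact_mod_cast hE2
  linear_combination (-1 : ℤ) * hE1' + hE2' + (r : ℤ) * hcast
end

section
/- Let G be an r-regular K3-irregular simple graph on n vertices. Then n ≤ C(r, 2) − ⌈r/2⌉ + 1, where C(r,2) is the binomial coefficient (r choose 2). -/
section Aux

variable {V : Type*} [Fintype V] [DecidableEq V] (G : SimpleGraph V) [DecidableRel G.Adj]

/-- Edges inside the neighborhood of `v`. -/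
def Ev (v : V) : Finset (Finset V) :=
  (G.cliqueFinset 2).filter (· ⊆ G.neighborFinset v)

lemma K3deg_eq_card_Ev (v : V) : K3deg G v = (Ev G v).card := by
  classical
  refine Finset.card_bij (fun t _ => t.erase v) ?_ ?_ ?_
  · intro t ht
    simp only [Finset.mem_filter, SimpleGraph.mem_cliqueFinset_iff] at ht
    obtain ⟨ht3, hvt⟩ := ht
    simp only [Ev, Finset.mem_filter, SimpleGraph.mem_cliqueFinset_iff]
    constructor
    · exact ⟨ht3.isClique.subset (Finset.erase_subset _ _),
        by rw [Finset.card_erase_of_mem hvt, ht3.card_eq]⟩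
    · intro a ha
      rw [Finset.mem_erase] at ha
      rw [SimpleGraph.mem_neighborFinset]
      exact ht3.isClique hvt ha.2 (Ne.symm ha.1)
  · intro t1 h1 t2 h2 he
    simp only [Finset.mem_filter] at h1 h2
    rw [← Finset.insert_erase h1.2, ← Finset.insert_erase h2.2, he]
  · intro s hs
    simp only [Ev, Finset.mem_filter, SimpleGraph.mem_cliqueFinset_iff] at hs
    obtain ⟨hs2, hsub⟩ := hs
    have hvs : v ∉ s := fun hv => G.notMem_neighborFinset_self v (hsub hv)
    refine ⟨insert v s, ?_, ?_⟩
    · simp only [Finset.mem_filter, SimpleGraph.mem_cliqueFinset_iff]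
      refine ⟨hs2.insert fun b hb => ?_, Finset.mem_insert_self _ _⟩
      exact (SimpleGraph.mem_neighborFinset G v b).mp (hsub hb)
    · rw [Finset.erase_insert hvs]

lemma card_Ev_le (v : V) {r : ℕ} (hreg : G.IsRegularOfDegree r) :
    (Ev G v).card ≤ r.choose 2 := by
  have h : Ev G v ⊆ (G.neighborFinset v).powersetCard 2 := by
    intro s hs
    simp only [Ev, Finset.mem_filter, SimpleGraph.mem_cliqueFinset_iff] at hs
    exact Finset.mem_powersetCard.mpr ⟨hs.2, hs.1.card_eq⟩
  calc (Ev G v).card ≤ ((G.neighborFinset v).powersetCard 2).card :=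
        Finset.card_le_card h
    _ = r.choose 2 := by
        rw [Finset.card_powersetCard, G.card_neighborFinset_eq_degree, hreg v]

/-- If `u` is a neighbor of `v` adjacent to all other neighbors of `v`,
then `u` and `v` have the same triangle-degree. -/
lemma K3deg_swap {v u : V} (huv : G.Adj v u) (hdeg : G.degree u = G.degree v)
    (hall : ∀ w ∈ G.neighborFinset v, w ≠ u → G.Adj u w) :
    K3deg G u = K3deg G v := by
  classical
  have hadj_of_mem : ∀ {t : Finset V} {x a : V}, G.IsNClique 3 t → x ∈ t → a ∈ t → a ≠ x →
      G.Adj x a := fun ht hx ha hax => ht.isClique hx ha (Ne.symm hax)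
  unfold K3deg
  refine Finset.card_bij (fun t _ => if v ∈ t then t else insert v (t.erase u)) ?_ ?_ ?_
  · intro t ht
    simp only [Finset.mem_filter, SimpleGraph.mem_cliqueFinset_iff] at ht ⊢
    obtain ⟨ht3, hut⟩ := ht
    by_cases hv : v ∈ t
    · simp [hv, ht3]
    · simp only [hv, if_false]
      refine ⟨?_, Finset.mem_insert_self _ _⟩
      have herase : G.IsNClique 2 (t.erase u) :=
        ⟨ht3.isClique.subset (Finset.erase_subset _ _),
          by rw [Finset.card_erase_of_mem hut, ht3.card_eq]⟩
      refine herase.insert fun b hb => ?_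
      rw [Finset.mem_erase] at hb
      -- b ∈ t, b ≠ u, so u ~ b; b ≠ v; b ∈ N v?
      have hub : G.Adj u b := hadj_of_mem ht3 hut hb.2 hb.1
      -- b ∈ N u = insert v (N v \ {u}); since b ≠ v need b ∈ N v, else b = v done
      by_cases hbv : b = v
      · exact absurd (hbv ▸ hb.2) hv
      · -- b ∈ N v: b is a neighbor of u, b ≠ v... need v ~ b.
        -- u adjacent to all of N v except u; that doesn't directly give b ∈ N v.
        -- Instead: N u = insert v ((N v).erase u) by cardinality.
        have hNu : G.neighborFinset u = insert v ((G.neighborFinset v).erase u) := by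
          apply (Finset.eq_of_subset_of_card_le ?_ ?_).symm
          · intro x hx
            rcases Finset.mem_insert.mp hx with rfl | hx
            · exact (SimpleGraph.mem_neighborFinset G u x).mpr huv.symm
            · rw [Finset.mem_erase] at hx
              exact (SimpleGraph.mem_neighborFinset G u x).mpr
                (hall x hx.2 hx.1)
          · rw [Finset.card_insert_of_notMem
              (fun h => G.notMem_neighborFinset_self v (Finset.mem_of_mem_erase h)),
              Finset.card_erase_of_mem ((SimpleGraph.mem_neighborFinset G v u).mpr huv)]
            have hcu : (G.neighborFinset u).card = (G.neighborFinset v).card := by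
              rw [G.card_neighborFinset_eq_degree, G.card_neighborFinset_eq_degree, hdeg]
            have hpos : 1 ≤ (G.neighborFinset v).card :=
              Finset.card_pos.mpr ⟨u, (SimpleGraph.mem_neighborFinset G v u).mpr huv⟩
            omega
        have hbNu : b ∈ G.neighborFinset u := (SimpleGraph.mem_neighborFinset G u b).mpr hub
        rw [hNu, Finset.mem_insert] at hbNu
        rcases hbNu with h | h
        · exact absurd h hbv
        · exact (SimpleGraph.mem_neighborFinset G v b).mp (Finset.mem_of_mem_erase h)
  · intro t1 h1 t2 h2 he
    simp only [Finset.mem_filter] at h1 h2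
    have hvu : v ≠ u := fun h => G.irrefl (h ▸ huv)
    by_cases hv1 : v ∈ t1 <;> by_cases hv2 : v ∈ t2
    · simpa [hv1, hv2] using he
    · simp only [hv1, hv2, if_true, if_false] at he
      exfalso
      have : u ∉ t1 := by
        rw [he, Finset.mem_insert]
        push_neg
        exact ⟨Ne.symm hvu, fun h => (Finset.mem_erase.mp h).1 rfl⟩
      exact this h1.2
    · simp only [hv1, hv2, if_true, if_false] at he
      exfalso
      have : u ∉ t2 := by
        rw [← he, Finset.mem_insert]
        push_neg
        exact ⟨Ne.symm hvu, fun h => (Finset.mem_erase.mp h).1 rfl⟩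
      exact this h2.2
    · simp only [hv1, hv2, if_false] at he
      have h1' : t1.erase u = t2.erase u := by
        have := congrArg (·.erase v) he
        simpa [Finset.erase_insert (show v ∉ t1.erase u from
          fun h => hv1 (Finset.mem_of_mem_erase h)),
          Finset.erase_insert (show v ∉ t2.erase u from
          fun h => hv2 (Finset.mem_of_mem_erase h))] using this
      rw [← Finset.insert_erase h1.2, ← Finset.insert_erase h2.2, h1']
  · intro s hs
    simp only [Finset.mem_filter, SimpleGraph.mem_cliqueFinset_iff] at hs
    obtain ⟨hs3, hvs⟩ := hs
    by_cases hus : u ∈ s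
    · refine ⟨s, ?_, ?_⟩
      · simp only [Finset.mem_filter, SimpleGraph.mem_cliqueFinset_iff]
        exact ⟨hs3, hus⟩
      · simp [hvs]
    · refine ⟨insert u (s.erase v), ?_, ?_⟩
      · simp only [Finset.mem_filter, SimpleGraph.mem_cliqueFinset_iff]
        refine ⟨?_, Finset.mem_insert_self _ _⟩
        have herase : G.IsNClique 2 (s.erase v) :=
          ⟨hs3.isClique.subset (Finset.erase_subset _ _),
            by rw [Finset.card_erase_of_mem hvs, hs3.card_eq]⟩
        refine herase.insert fun b hb => ?_
        rw [Finset.mem_erase] at hb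
        have hvb : G.Adj v b := hadj_of_mem hs3 hvs hb.2 hb.1
        refine hall b ((SimpleGraph.mem_neighborFinset G v b).mpr hvb) ?_
        exact fun h => hus (h ▸ hb.2)
      · have hvnot : v ∉ insert u (s.erase v) := by
          rw [Finset.mem_insert]
          push_neg
          exact ⟨fun h => G.irrefl (h ▸ huv), fun h => (Finset.mem_erase.mp h).1 rfl⟩
        simp only [hvnot, if_false]
        rw [Finset.erase_insert_eq_erase,
          Finset.erase_eq_of_notMem (fun h => hus (Finset.mem_of_mem_erase h)),
          Finset.insert_erase hvs]

/-- Key bound: every triangle-degree is at most `C(r,2) - ⌈r/2⌉`. -/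
lemma K3deg_bound {r : ℕ} (hreg : G.IsRegularOfDegree r)
    (hirr : ∀ u w : V, K3deg G u = K3deg G w → u = w) (v : V) :
    K3deg G v + (r + 1) / 2 ≤ r.choose 2 := by
  classical
  by_contra hcon
  push_neg at hcon
  set c := (r + 1) / 2 with hc
  have hEle : (Ev G v).card ≤ r.choose 2 := card_Ev_le G v hreg
  have hK : K3deg G v = (Ev G v).card := K3deg_eq_card_Ev G v
  rw [hK] at hcon
  have hc0 : 1 ≤ c := by omega
  have hr1 : 1 ≤ r := by omega
  set P := (G.neighborFinset v).powersetCard 2 with hP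
  have hEP : Ev G v ⊆ P := by
    intro s hs
    simp only [Ev, Finset.mem_filter, SimpleGraph.mem_cliqueFinset_iff] at hs
    exact Finset.mem_powersetCard.mpr ⟨hs.2, hs.1.card_eq⟩
  have hPcard : P.card = r.choose 2 := by
    rw [hP, Finset.card_powersetCard, G.card_neighborFinset_eq_degree, hreg v]
  have hm : (P \ Ev G v).card = r.choose 2 - (Ev G v).card := by
    rw [Finset.card_sdiff_of_subset hEP, hPcard]
  have hmle : (P \ Ev G v).card ≤ c - 1 := by omega
  -- covered vertices
  set B := (P \ Ev G v).biUnion id with hB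
  have hBcard : B.card ≤ 2 * (c - 1) := by
    calc B.card ≤ ∑ s ∈ P \ Ev G v, (id s).card := Finset.card_biUnion_le
      _ = ∑ s ∈ P \ Ev G v, 2 := by
          apply Finset.sum_congr rfl
          intro s hs
          have := hEP
          have hsP : s ∈ P := (Finset.mem_sdiff.mp hs).1
          exact (Finset.mem_powersetCard.mp hsP).2
      _ = (P \ Ev G v).card * 2 := by rw [Finset.sum_const, smul_eq_mul]
      _ ≤ 2 * (c - 1) := by omega
  have hBlt : B.card < (G.neighborFinset v).card := by
    rw [G.card_neighborFinset_eq_degree, hreg v]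
    omega
  have hnsub : ¬ G.neighborFinset v ⊆ B := fun h =>
    absurd (Finset.card_le_card h) (by omega)
  obtain ⟨u, huN, huB⟩ := Finset.not_subset.mp hnsub
  have huv : G.Adj v u := (SimpleGraph.mem_neighborFinset G v u).mp huN
  have hall : ∀ w ∈ G.neighborFinset v, w ≠ u → G.Adj u w := by
    intro w hwN hwu
    have hpair : ({u, w} : Finset V) ∈ P := by
      refine Finset.mem_powersetCard.mpr ⟨?_, ?_⟩
      · intro x hx
        rcases Finset.mem_insert.mp hx with rfl | hx
        · exact huN
        · exact (Finset.mem_singleton.mp hx) ▸ hwN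
      · rw [Finset.card_insert_of_notMem (by simp [Ne.symm hwu]), Finset.card_singleton]
    have hpairE : ({u, w} : Finset V) ∈ Ev G v := by
      by_contra hne
      have : ({u, w} : Finset V) ∈ P \ Ev G v := Finset.mem_sdiff.mpr ⟨hpair, hne⟩
      exact huB (Finset.mem_biUnion.mpr ⟨_, this, by simp⟩)
    simp only [Ev, Finset.mem_filter, SimpleGraph.mem_cliqueFinset_iff] at hpairE
    exact hpairE.1.isClique (by simp) (by simp) (Ne.symm hwu)
  have heq : K3deg G u = K3deg G v := K3deg_swap G huv (by rw [hreg u, hreg v]) hall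
  have : u = v := hirr u v heq
  exact G.irrefl (this ▸ huv)

end Aux

theorem stmt11 {V : Type*} [Fintype V] [DecidableEq V] (G : SimpleGraph V) [DecidableRel G.Adj]
    (n r : ℕ) (hn : Fintype.card V = n) (hreg : G.IsRegularOfDegree r)
    (hirr : ∀ u w : V, K3deg G u = K3deg G w → u = w) :
    (n : ℤ) ≤ (r.choose 2 : ℤ) - ⌈(r : ℚ) / 2⌉ + 1 := by
  classical
  have h1 : r ≤ 2 * ((r + 1) / 2) := by omega
  have h2 : 2 * ((r + 1) / 2) ≤ r + 1 := by omega
  have hceil : ⌈(r : ℚ) / 2⌉ = (((r + 1) / 2 : ℕ) : ℤ) := by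
    have h1' : (r : ℚ) ≤ 2 * (((r + 1) / 2 : ℕ) : ℚ) := by exact_mod_cast h1
    have h2' : 2 * (((r + 1) / 2 : ℕ) : ℚ) ≤ (r : ℚ) + 1 := by exact_mod_cast h2
    rw [Int.ceil_eq_iff]
    simp only [Int.cast_natCast]
    constructor
    · linarith
    · linarith
  rw [hceil]
  rcases isEmpty_or_nonempty V with hV | hV
  · have hn0 : n = 0 := by rw [← hn]; exact Fintype.card_eq_zero
    have hcc : (r + 1) / 2 ≤ r.choose 2 + 1 := by
      rcases r with _ | k
      · simp
      · have h : (k + 1).choose 2 = k.choose 1 + k.choose 2 := Nat.choose_succ_succ k 1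
        rw [Nat.choose_one_right] at h
        omega
    rw [hn0]
    omega
  · obtain ⟨v0⟩ := hV
    have hb := K3deg_bound G hreg hirr
    have hcle : (r + 1) / 2 ≤ r.choose 2 := le_trans (by omega) (hb v0)
    have hinj : Set.InjOn (K3deg G) ↑(Finset.univ : Finset V) := fun a _ b _ h => hirr a b h
    have hmap : ∀ v ∈ (Finset.univ : Finset V),
        K3deg G v ∈ Finset.range (r.choose 2 - (r + 1) / 2 + 1) := by
      intro v _
      rw [Finset.mem_range]
      have := hb v
      omega
    have hcard := Finset.card_le_card_of_injOn (K3deg G) hmap hinj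
    rw [Finset.card_univ, hn, Finset.card_range] at hcard
    omega
end

section
/- Let G be an r-regular K3-irregular simple graph on n vertices. Then for every vertex v of G, the K3-degree of v satisfies, as an inequality of integers, 2·K3deg(v) + nr − 2r² ≥ n − r − 1 (equivalently, K3deg(v) ≥ ⌈(n − r − 1)/2⌉ − nr/2 + r²). -/
open Finset

private lemma card_filter_product_adj {V : Type*} [Fintype V] [DecidableEq V] (G : SimpleGraph V)
    [DecidableRel G.Adj] (s o : Finset V) :
    ((s ×ˢ o).filter fun p => G.Adj p.1 p.2).card
      = ∑ u ∈ s, (o.filter (fun w => G.Adj u w)).card := by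
  rw [Finset.card_filter, Finset.sum_product]
  exact Finset.sum_congr rfl fun u _ => (Finset.card_filter _ _).symm

private lemma K3_double_count {V : Type*} [Fintype V] [DecidableEq V] (G : SimpleGraph V)
    [DecidableRel G.Adj] (v : V) :
    2 * K3deg G v =
      (((G.neighborFinset v) ×ˢ (G.neighborFinset v)).filter fun p => G.Adj p.1 p.2).card := by
  classical
  set P := ((G.neighborFinset v) ×ˢ (G.neighborFinset v)).filter (fun p => G.Adj p.1 p.2) with hP
  set T := (G.cliqueFinset 3).filter (fun t => v ∈ t) with hT
  have hmap : ∀ p ∈ P, insert v {p.1, p.2} ∈ T := by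
    rintro ⟨a, b⟩ hp
    simp only [hP, mem_filter, mem_product, SimpleGraph.mem_neighborFinset] at hp
    obtain ⟨⟨ha, hb⟩, hab⟩ := hp
    rw [hT, mem_filter, SimpleGraph.mem_cliqueFinset_iff]
    exact ⟨SimpleGraph.is3Clique_triple_iff.mpr ⟨ha, hb, hab⟩, mem_insert_self _ _⟩
  have key := Finset.card_eq_sum_card_fiberwise hmap
  have hfib : ∀ t ∈ T, (P.filter fun p => insert v {p.1, p.2} = t).card = 2 := by
    intro t ht
    simp only [hT, mem_filter, SimpleGraph.mem_cliqueFinset_iff] at ht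
    obtain ⟨hcl, hv⟩ := ht
    have hcard : t.card = 3 := hcl.card_eq
    have h2 : (t.erase v).card = 2 := by rw [card_erase_of_mem hv, hcard]
    obtain ⟨a, b, hab, hteq⟩ := Finset.card_eq_two.mp h2
    have ha' : a ∈ t.erase v := by rw [hteq]; simp
    have hb' : b ∈ t.erase v := by rw [hteq]; simp
    have hat : a ∈ t := mem_of_mem_erase ha'
    have hbt : b ∈ t := mem_of_mem_erase hb'
    have hav : a ≠ v := ne_of_mem_erase ha'
    have hbv : b ≠ v := ne_of_mem_erase hb'
    have hva : G.Adj v a := hcl.isClique hv hat (Ne.symm hav)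
    have hvb : G.Adj v b := hcl.isClique hv hbt (Ne.symm hbv)
    have hab' : G.Adj a b := hcl.isClique hat hbt hab
    have hset : (P.filter fun p => insert v {p.1, p.2} = t) = {(a, b), (b, a)} := by
      ext ⟨x, y⟩
      simp only [hP, mem_filter, mem_product, SimpleGraph.mem_neighborFinset, mem_insert,
        mem_singleton, Prod.mk.injEq]
      constructor
      · rintro ⟨⟨⟨hx, hy⟩, hxy⟩, heq⟩
        have hxv : x ≠ v := fun h => G.irrefl (h ▸ hx)
        have hyv : y ≠ v := fun h => G.irrefl (h ▸ hy)
        have hxt : x ∈ t.erase v := by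
          rw [← heq]; simp [hxv]
        have hyt : y ∈ t.erase v := by
          rw [← heq]; simp [hyv]
        rw [hteq, mem_insert, mem_singleton] at hxt hyt
        have hxyne : x ≠ y := G.ne_of_adj hxy
        rcases hxt with rfl | rfl
        · rcases hyt with rfl | rfl
          · exact absurd rfl hxyne
          · exact Or.inl ⟨rfl, rfl⟩
        · rcases hyt with rfl | rfl
          · exact Or.inr ⟨rfl, rfl⟩
          · exact absurd rfl hxyne
      · have hins : insert v ({a, b} : Finset V) = t := by
          rw [← hteq, insert_erase hv]
        rintro (⟨rfl, rfl⟩ | ⟨rfl, rfl⟩)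
        · exact ⟨⟨⟨hva, hvb⟩, hab'⟩, hins⟩
        · refine ⟨⟨⟨hvb, hva⟩, hab'.symm⟩, ?_⟩
          rw [Finset.pair_comm]
          exact hins
    rw [hset]
    rw [card_insert_of_notMem (by simp [hab, Ne.symm hab]), card_singleton]
  rw [key, Finset.sum_congr rfl hfib, Finset.sum_const, smul_eq_mul]
  show 2 * T.card = T.card * 2
  ring

theorem stmt12 {V : Type*} [Fintype V] [DecidableEq V] (G : SimpleGraph V) [DecidableRel G.Adj]
    (n r : ℕ) (hn : Fintype.card V = n) (hreg : G.IsRegularOfDegree r)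
    (hirr : ∀ u w : V, K3deg G u = K3deg G w → u = w)
    (v : V) :
    (n : ℤ) - r - 1 ≤ 2 * K3deg G v + (n : ℤ) * r - 2 * r ^ 2 := by
  classical
  set Nv := G.neighborFinset v with hNv
  set S := insert v Nv with hS
  set O := Finset.univ \ S with hO
  have hvNv : v ∉ Nv := by simp [hNv]
  have hcardNv : Nv.card = r := hreg v
  have hcardS : S.card = r + 1 := by rw [hS, card_insert_of_notMem hvNv, hcardNv]
  have hrn : r + 1 ≤ n := by rw [← hcardS, ← hn, ← card_univ]; exact card_le_card (subset_univ S)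
  have hcardO : O.card = n - (r + 1) := by
    rw [hO, card_sdiff_of_subset (subset_univ S), card_univ, hn, hcardS]
  -- every w ∈ O has a non-neighbor in Nv
  have hchoice : ∀ w, ∃ u, w ∈ O → u ∈ Nv ∧ ¬ G.Adj u w := by
    intro w
    by_contra h
    push_neg at h
    have hwO : w ∈ O := (h v).1
    have hall : ∀ u ∈ Nv, G.Adj u w := by
      intro u hu
      have := (h u).2
      exact this hu
    have hsub : Nv ⊆ G.neighborFinset w := by
      intro u hu
      rw [SimpleGraph.mem_neighborFinset]
      exact (hall u hu).symm
    have heqN : Nv = G.neighborFinset w :=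
      Finset.eq_of_subset_of_card_le hsub (by rw [hcardNv]; exact Nat.le_of_eq (hreg w))
    have hK : K3deg G v = K3deg G w := by
      have h1 := K3_double_count G v
      have h2 := K3_double_count G w
      rw [← hNv] at h1
      rw [← heqN] at h2
      omega
    have : v = w := hirr v w hK
    rw [hO, mem_sdiff, hS] at hwO
    exact hwO.2 (this ▸ mem_insert_self v Nv)
  choose f hf using hchoice
  -- injection from O into non-adjacent pairs
  have hOB : O.card ≤ ((Nv ×ˢ O).filter fun p => ¬ G.Adj p.1 p.2).card := by
    apply Finset.card_le_card_of_injOn (fun w => (f w, w))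
    · intro w hw
      simp only [mem_coe, mem_filter, mem_product]
      exact ⟨⟨(hf w hw).1, hw⟩, (hf w hw).2⟩
    · intro a _ b _ h
      exact congrArg Prod.snd h
  -- split product by adjacency
  have hsplit : ((Nv ×ˢ O).filter fun p => G.Adj p.1 p.2).card
      + ((Nv ×ˢ O).filter fun p => ¬ G.Adj p.1 p.2).card = r * O.card := by
    rw [Finset.card_filter_add_card_filter_not, card_product, hcardNv]
  -- per-vertex degree split
  have hdeg : ∀ u ∈ Nv, (S.filter (fun w => G.Adj u w)).card
      + (O.filter (fun w => G.Adj u w)).card = r := by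
    intro u hu
    have hU : S ∪ O = Finset.univ := by
      rw [hO, Finset.union_sdiff_of_subset (subset_univ S)]
    have hdisj : Disjoint (S.filter (fun w => G.Adj u w)) (O.filter (fun w => G.Adj u w)) :=
      Finset.disjoint_filter_filter Finset.disjoint_sdiff
    rw [← card_union_of_disjoint hdisj, ← filter_union, hU]
    have : Finset.univ.filter (fun w => G.Adj u w) = G.neighborFinset u := by
      ext w; simp [SimpleGraph.mem_neighborFinset]
    rw [this]; exact hreg u
  have hSfil : ∀ u ∈ Nv, (S.filter (fun w => G.Adj u w)).card
      = 1 + (Nv.filter (fun w => G.Adj u w)).card := by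
    intro u hu
    have huv : G.Adj u v := ((SimpleGraph.mem_neighborFinset G v u).mp (hNv ▸ hu)).symm
    rw [hS, filter_insert, if_pos huv, card_insert_of_notMem (fun hc => hvNv (mem_filter.mp hc).1)]
    omega
  -- sum everything
  have hsum : r * r = r + ((Nv ×ˢ Nv).filter fun p => G.Adj p.1 p.2).card
      + ((Nv ×ˢ O).filter fun p => G.Adj p.1 p.2).card := by
    have e1 : ∑ u ∈ Nv, r = r * r := by rw [Finset.sum_const, smul_eq_mul, hcardNv]
    rw [card_filter_product_adj, card_filter_product_adj, ← e1]
    rw [← Finset.sum_congr rfl hdeg]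
    rw [Finset.sum_add_distrib, Finset.sum_congr rfl hSfil, Finset.sum_add_distrib,
      Finset.sum_const, smul_eq_mul, hcardNv]
    ring
  have hdc := K3_double_count G v
  rw [← hNv] at hdc
  -- pass to integers
  have hOZ : (O.card : ℤ) = n - r - 1 := by
    rw [hcardO]; push_cast [hrn]; ring
  rw [← hdc] at hsum
  have e1 : (r : ℤ) * r = r + 2 * (K3deg G v : ℤ)
      + (((Nv ×ˢ O).filter fun p => G.Adj p.1 p.2).card : ℤ) := by
    exact_mod_cast hsum
  have e2 : (((Nv ×ˢ O).filter fun p => G.Adj p.1 p.2).card : ℤ)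
      + (((Nv ×ˢ O).filter fun p => ¬ G.Adj p.1 p.2).card : ℤ) = r * ((n : ℤ) - r - 1) := by
    rw [← hOZ]; exact_mod_cast hsplit
  have e3 : ((n : ℤ) - r - 1) ≤ (((Nv ×ˢ O).filter fun p => ¬ G.Adj p.1 p.2).card : ℤ) := by
    rw [← hOZ]; exact_mod_cast hOB
  nlinarith [e1, e2, e3]
end

section
/- For every natural number r with 1 ≤ r ≤ 6, there is no r-regular K3-irregular simple graph (on at least two vertices). -/
namespace K3x

open Finset

set_option linter.unusedSectionVars false

variable {V : Type*} [Fintype V] [DecidableEq V] (G : SimpleGraph V) [DecidableRel G.Adj]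

/-- ordered adjacent pair count between two finsets -/
def EP (s t : Finset V) : ℕ := ∑ a ∈ s, (t.filter (fun b => G.Adj a b)).card

/-- the non-(closed-)neighborhood of a vertex -/
def BB (v : V) : Finset V := Finset.univ \ insert v (G.neighborFinset v)

lemma EP_eq_card (s t : Finset V) :
    EP G s t = ((s ×ˢ t).filter fun p => G.Adj p.1 p.2).card := by
  rw [Finset.card_filter, Finset.sum_product, EP]
  exact Finset.sum_congr rfl fun a _ => (Finset.card_filter _ _)

lemma EP_comm (s t : Finset V) : EP G s t = EP G t s := by
  simp only [EP, Finset.card_filter]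
  rw [Finset.sum_comm]
  exact Finset.sum_congr rfl fun b _ => Finset.sum_congr rfl fun a _ =>
    if_congr (G.adj_comm _ _) rfl rfl

lemma EP_union_left {s₁ s₂ : Finset V} (t : Finset V) (h : Disjoint s₁ s₂) :
    EP G (s₁ ∪ s₂) t = EP G s₁ t + EP G s₂ t := Finset.sum_union h

lemma EP_union_right (s : Finset V) {t₁ t₂ : Finset V} (h : Disjoint t₁ t₂) :
    EP G s (t₁ ∪ t₂) = EP G s t₁ + EP G s t₂ := by
  rw [EP_comm, EP_union_left _ _ h, EP_comm G t₁, EP_comm G t₂]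

lemma EP_insert_left {a : V} {s : Finset V} (t : Finset V) (h : a ∉ s) :
    EP G (insert a s) t = (t.filter (fun b => G.Adj a b)).card + EP G s t :=
  Finset.sum_insert h

lemma EP_term_le {s : Finset V} {a : V} (ha : a ∈ s) :
    (s.filter (fun b => G.Adj a b)).card ≤ s.card - 1 := by
  have h : s.filter (fun b => G.Adj a b) ⊆ s.erase a := by
    intro b hb
    simp only [mem_filter] at hb
    exact Finset.mem_erase.2 ⟨fun h => G.irrefl (h ▸ hb.2), hb.1⟩
  calc (s.filter (fun b => G.Adj a b)).card ≤ (s.erase a).card := Finset.card_le_card h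
  _ = s.card - 1 := Finset.card_erase_of_mem ha

lemma EP_self_le (s : Finset V) : EP G s s ≤ s.card * (s.card - 1) := by
  calc EP G s s ≤ ∑ _a ∈ s, (s.card - 1) :=
        Finset.sum_le_sum fun a ha => EP_term_le G ha
  _ = s.card * (s.card - 1) := by rw [Finset.sum_const, smul_eq_mul]

lemma EP_self_even (s : Finset V) : Even (EP G s s) := by
  classical
  rw [EP_eq_card]
  set f : V → ℕ := fun v => ((Fintype.equivFin V) v : ℕ) with hf
  have hfinj : Function.Injective f := fun a b h => (Fintype.equivFin V).injective (Fin.ext h)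
  set E := (s ×ˢ s).filter fun p => G.Adj p.1 p.2 with hE
  have hne : ∀ p ∈ E, f p.1 ≠ f p.2 := by
    intro p hp h
    rw [hE, mem_filter] at hp
    exact G.irrefl ((hfinj h) ▸ hp.2)
  have hsplit : E = (E.filter fun p => f p.1 < f p.2) ∪ (E.filter fun p => f p.2 < f p.1) := by
    rw [← Finset.filter_or]
    symm
    apply Finset.filter_true_of_mem
    intro p hp
    have := hne p hp
    omega
  have hdisj : Disjoint (E.filter fun p => f p.1 < f p.2) (E.filter fun p => f p.2 < f p.1) := by
    apply Finset.disjoint_left.2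
    intro p hp hp'
    simp only [mem_filter] at hp hp'
    omega
  have hcard : (E.filter fun p => f p.1 < f p.2).card = (E.filter fun p => f p.2 < f p.1).card := by
    apply Finset.card_bij' (fun p _ => p.swap) (fun p _ => p.swap)
    · intro p _; rfl
    · intro p _; rfl
    · intro p hp
      simp only [mem_filter, hE, Finset.mem_product] at hp ⊢
      exact ⟨⟨⟨hp.1.1.2, hp.1.1.1⟩, G.adj_symm hp.1.2⟩, hp.2⟩
    · intro p hp
      simp only [mem_filter, hE, Finset.mem_product] at hp ⊢
      exact ⟨⟨⟨hp.1.1.2, hp.1.1.1⟩, G.adj_symm hp.1.2⟩, hp.2⟩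
  rw [hsplit, Finset.card_union_of_disjoint hdisj, hcard]
  exact ⟨_, rfl⟩

lemma two_mul_K3deg (v : V) :
    2 * K3deg G v = EP G (G.neighborFinset v) (G.neighborFinset v) := by
  classical
  rw [EP_eq_card]
  set A := G.neighborFinset v with hA
  set T := (G.cliqueFinset 3).filter (fun t => v ∈ t) with hT
  set E := (A ×ˢ A).filter (fun p => G.Adj p.1 p.2) with hE
  have hmapsto : ∀ p ∈ E, insert v ({p.1, p.2} : Finset V) ∈ T := by
    intro p hp
    rw [hE, mem_filter, Finset.mem_product] at hp
    obtain ⟨⟨h1, h2⟩, h3⟩ := hp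
    rw [hA, SimpleGraph.mem_neighborFinset] at h1 h2
    rw [hT, mem_filter, SimpleGraph.mem_cliqueFinset_iff]
    exact ⟨SimpleGraph.is3Clique_triple_iff.2 ⟨h1, h2, h3⟩, Finset.mem_insert_self _ _⟩
  have key := Finset.card_eq_sum_card_fiberwise hmapsto
  have hfib : ∀ t ∈ T, (E.filter fun p => insert v ({p.1, p.2} : Finset V) = t).card = 2 := by
    intro t ht
    rw [hT, mem_filter] at ht
    obtain ⟨ht1, ht2⟩ := ht
    have hnc := SimpleGraph.mem_cliqueFinset_iff.1 ht1
    have hcard3 : t.card = 3 := hnc.2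
    have hclique := hnc.1
    have h2 : (t.erase v).card = 2 := by
      rw [Finset.card_erase_of_mem ht2, hcard3]
    obtain ⟨a, b, hab, habs⟩ := Finset.card_eq_two.1 h2
    have hat' : a ∈ t.erase v := by rw [habs]; exact Finset.mem_insert_self _ _
    have hbt' : b ∈ t.erase v := by
      rw [habs]; exact Finset.mem_insert_of_mem (Finset.mem_singleton_self _)
    have hat : a ∈ t := Finset.mem_of_mem_erase hat'
    have hbt : b ∈ t := Finset.mem_of_mem_erase hbt'
    have hav : a ≠ v := Finset.ne_of_mem_erase hat'
    have hbv : b ≠ v := Finset.ne_of_mem_erase hbt'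
    have hadjva : G.Adj v a := hclique ht2 hat (Ne.symm hav)
    have hadjvb : G.Adj v b := hclique ht2 hbt (Ne.symm hbv)
    have hadjab : G.Adj a b := hclique hat hbt hab
    have hfeq : (E.filter fun p => insert v ({p.1, p.2} : Finset V) = t)
        = {(a, b), (b, a)} := by
      ext p
      simp only [mem_filter, hE, Finset.mem_product, Finset.mem_insert, Finset.mem_singleton]
      constructor
      · rintro ⟨⟨⟨hp1, hp2⟩, hpadj⟩, heq⟩
        rw [hA, SimpleGraph.mem_neighborFinset] at hp1 hp2
        have hv1 : p.1 ≠ v := fun h => G.irrefl (h ▸ hp1)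
        have hv2 : p.2 ≠ v := fun h => G.irrefl (h ▸ hp2)
        have hvnot : v ∉ ({p.1, p.2} : Finset V) := by
          simp only [Finset.mem_insert, Finset.mem_singleton]
          push_neg
          exact ⟨Ne.symm hv1, Ne.symm hv2⟩
        have hpair : ({p.1, p.2} : Finset V) = {a, b} := by
          rw [← habs, ← heq, Finset.erase_insert hvnot]
        have hp1m : p.1 ∈ ({a, b} : Finset V) := by
          rw [← hpair]; exact Finset.mem_insert_self _ _
        have hp2m : p.2 ∈ ({a, b} : Finset V) := by
          rw [← hpair]; exact Finset.mem_insert_of_mem (Finset.mem_singleton_self _)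
        have hne12 : p.1 ≠ p.2 := G.ne_of_adj hpadj
        simp only [Finset.mem_insert, Finset.mem_singleton] at hp1m hp2m
        rcases hp1m with h | h <;> rcases hp2m with h' | h'
        · exact absurd (h.trans h'.symm) hne12
        · left; exact Prod.ext h h'
        · right; exact Prod.ext h h'
        · exact absurd (h.trans h'.symm) hne12
      · rintro (h | h) <;> subst h
        · refine ⟨⟨⟨?_, ?_⟩, hadjab⟩, ?_⟩
          · rw [hA, SimpleGraph.mem_neighborFinset]; exact hadjva
          · rw [hA, SimpleGraph.mem_neighborFinset]; exact hadjvb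
          · show insert v ({a, b} : Finset V) = t
            rw [← habs, Finset.insert_erase ht2]
        · refine ⟨⟨⟨?_, ?_⟩, G.adj_symm hadjab⟩, ?_⟩
          · rw [hA, SimpleGraph.mem_neighborFinset]; exact hadjvb
          · rw [hA, SimpleGraph.mem_neighborFinset]; exact hadjva
          · show insert v ({b, a} : Finset V) = t
            rw [Finset.pair_comm, ← habs, Finset.insert_erase ht2]
    rw [hfeq]
    rw [Finset.card_insert_of_notMem, Finset.card_singleton]
    simp only [Finset.mem_singleton, Prod.mk.injEq]
    rintro ⟨h1, h2⟩
    exact hab h1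
  rw [key, Finset.sum_congr rfl hfib, Finset.sum_const, smul_eq_mul]
  show 2 * T.card = T.card * 2
  ring

lemma EP_row (s : Finset V) {r : ℕ} (hreg : G.IsRegularOfDegree r) :
    EP G s Finset.univ = s.card * r := by
  have h : ∀ a ∈ s, (Finset.univ.filter (fun b => G.Adj a b)).card = r := by
    intro a _
    rw [← SimpleGraph.neighborFinset_eq_filter, SimpleGraph.card_neighborFinset_eq_degree]
    exact hreg a
  rw [EP, Finset.sum_congr rfl h, Finset.sum_const, smul_eq_mul]

lemma star' {r : ℕ} (hreg : G.IsRegularOfDegree r) (v : V) :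
    r * r + EP G (BB G v) (BB G v) = (BB G v).card * r + r + 2 * K3deg G v := by
  rw [BB]
  classical
  set A := G.neighborFinset v with hA
  set B := Finset.univ \ insert v A with hB
  have hvA : v ∉ A := by simp [hA]
  have hcardA : A.card = r := by
    rw [hA, SimpleGraph.card_neighborFinset_eq_degree]; exact hreg v
  have hsplit : Finset.univ = insert v A ∪ B := (Finset.union_sdiff_of_subset (Finset.subset_univ _)).symm
  have hdisj : Disjoint (insert v A) B := Finset.disjoint_sdiff
  have hfiltA : A.filter (fun b => G.Adj v b) = A := by
    apply Finset.filter_true_of_mem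
    intro a ha
    rwa [hA, SimpleGraph.mem_neighborFinset] at ha
  have hfiltB : B.filter (fun b => G.Adj v b) = ∅ := by
    apply Finset.filter_false_of_mem
    intro b hb h
    rw [hB, Finset.mem_sdiff] at hb
    exact hb.2 (Finset.mem_insert_of_mem ((SimpleGraph.mem_neighborFinset _ _ _).2 h))
  have hIA : ∀ X : Finset V, EP G X (insert v A) = (X.filter (fun b => G.Adj b v)).card + EP G X A := by
    intro X
    rw [EP_comm, EP_insert_left _ _ hvA, EP_comm G A X]
    congr 1
    apply Finset.card_nbij id (fun b hb => by
      simp only [Finset.mem_coe, mem_filter] at hb ⊢; exact ⟨hb.1, G.adj_symm hb.2⟩)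
    · intro b hb b' hb' h; exact h
    · intro b hb
      simp only [Set.mem_image, Finset.mem_coe, mem_filter] at hb ⊢
      exact ⟨b, ⟨hb.1, G.adj_symm hb.2⟩, rfl⟩
  -- row A
  have rowA : EP G A Finset.univ = r * r := by rw [EP_row G A hreg, hcardA]
  have rowA' : EP G A Finset.univ = (A.filter (fun b => G.Adj b v)).card + EP G A A + EP G A B := by
    rw [hsplit, EP_union_right G _ hdisj, hIA]
  have hAv : (A.filter (fun b => G.Adj b v)).card = r := by
    rw [show A.filter (fun b => G.Adj b v) = A from ?_, hcardA]
    apply Finset.filter_true_of_mem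
    intro a ha
    rw [hA, SimpleGraph.mem_neighborFinset] at ha
    exact G.adj_symm ha
  -- row B
  have rowB : EP G B Finset.univ = B.card * r := EP_row G B hreg
  have rowB' : EP G B Finset.univ = (B.filter (fun b => G.Adj b v)).card + EP G B A + EP G B B := by
    rw [hsplit, EP_union_right G _ hdisj, hIA]
  have hBv : (B.filter (fun b => G.Adj b v)).card = 0 := by
    rw [Finset.card_eq_zero]
    apply Finset.filter_false_of_mem
    intro b hb h
    rw [hB, Finset.mem_sdiff] at hb
    exact hb.2 (Finset.mem_insert_of_mem ((SimpleGraph.mem_neighborFinset _ _ _).2 (G.adj_symm h)))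
  have hcomm : EP G A B = EP G B A := EP_comm G A B
  have htri : EP G A A = 2 * K3deg G v := (two_mul_K3deg G v).symm
  omega

lemma filter_subset_erase (s : Finset V) (a : V) :
    s.filter (fun b => G.Adj a b) ⊆ s.erase a := by
  intro b hb
  simp only [mem_filter] at hb
  exact Finset.mem_erase.2 ⟨fun h => G.irrefl (h ▸ hb.2), hb.1⟩

lemma EP_insert_insert {a : V} {s : Finset V} (h : a ∉ s) :
    EP G (insert a s) (insert a s) = EP G s s + 2 * (s.filter (fun b => G.Adj a b)).card := by
  rw [EP_insert_left _ _ h]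
  have h1 : (insert a s).filter (fun b => G.Adj a b) = s.filter (fun b => G.Adj a b) := by
    simp [Finset.filter_insert]
  have h2 : EP G s (insert a s) = (s.filter (fun b => G.Adj a b)).card + EP G s s := by
    rw [EP_comm, EP_insert_left _ _ h, EP_comm G s s]
  rw [h1, h2]
  ring

lemma t_le_12 (hreg : G.IsRegularOfDegree 6)
    (hinj : ∀ u w : V, K3deg G u = K3deg G w → u = w) (u : V) : K3deg G u ≤ 12 := by
  by_contra hcon
  push_neg at hcon
  set A := G.neighborFinset u with hA
  have hcardA : A.card = 6 := by
    rw [hA, SimpleGraph.card_neighborFinset_eq_degree]; exact hreg u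
  have h2t : 2 * K3deg G u = EP G A A := two_mul_K3deg G u
  have hterm : ∀ a ∈ A, (A.filter (fun b => G.Adj a b)).card ≤ 5 := by
    intro a ha
    have := EP_term_le (G := G) ha
    omega
  have hex : ∃ w ∈ A, (A.filter (fun b => G.Adj w b)).card = 5 := by
    by_contra hno
    push_neg at hno
    have hb : ∀ a ∈ A, (A.filter (fun b => G.Adj a b)).card ≤ 4 := by
      intro a ha
      have := hterm a ha
      have := hno a ha
      omega
    have hsum : EP G A A ≤ ∑ _a ∈ A, 4 := Finset.sum_le_sum hb
    rw [Finset.sum_const, smul_eq_mul, hcardA] at hsum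
    omega
  obtain ⟨w, hwA, hw5⟩ := hex
  have hwadj : G.Adj u w := (SimpleGraph.mem_neighborFinset _ _ _).1 hwA
  have hfull : A.filter (fun b => G.Adj w b) = A.erase w := by
    apply Finset.eq_of_subset_of_card_le (filter_subset_erase G A w)
    rw [Finset.card_erase_of_mem hwA, hcardA, hw5]
  have hsub : A.erase w ⊆ G.neighborFinset w := by
    rw [← hfull]
    intro b hb
    simp only [mem_filter] at hb
    exact (SimpleGraph.mem_neighborFinset _ _ _).2 hb.2
  have huA : u ∉ A := by simp [hA]
  have huer : u ∉ A.erase w := fun h => huA (Finset.mem_of_mem_erase h)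
  have hNw : G.neighborFinset w = insert u (A.erase w) := by
    symm
    apply Finset.eq_of_subset_of_card_le
    · intro x hx
      rcases Finset.mem_insert.1 hx with rfl | hx'
      · exact (SimpleGraph.mem_neighborFinset _ _ _).2 (G.adj_symm hwadj)
      · exact hsub hx'
    · rw [SimpleGraph.card_neighborFinset_eq_degree, hreg w,
        Finset.card_insert_of_notMem huer, Finset.card_erase_of_mem hwA, hcardA]
  have h2tw : 2 * K3deg G w
      = EP G (A.erase w) (A.erase w) + 2 * ((A.erase w).filter (fun b => G.Adj u b)).card := by
    rw [two_mul_K3deg G w, hNw, EP_insert_insert G huer]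
  have hfilu : (A.erase w).filter (fun b => G.Adj u b) = A.erase w := by
    apply Finset.filter_true_of_mem
    intro b hb
    have : b ∈ A := Finset.mem_of_mem_erase hb
    rwa [hA, SimpleGraph.mem_neighborFinset] at this
  have hAA : EP G A A
      = EP G (A.erase w) (A.erase w) + 2 * ((A.erase w).filter (fun b => G.Adj w b)).card := by
    conv_lhs => rw [← Finset.insert_erase hwA]
    exact EP_insert_insert G (Finset.notMem_erase _ _)
  have hfilw : (A.erase w).filter (fun b => G.Adj w b) = A.erase w := by
    apply Finset.filter_true_of_mem
    intro b hb
    have hbf : b ∈ A.filter (fun b => G.Adj w b) := hfull ▸ hb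
    exact (Finset.mem_filter.1 hbf).2
  rw [hfilu, Finset.card_erase_of_mem hwA, hcardA] at h2tw
  rw [hfilw, Finset.card_erase_of_mem hwA, hcardA] at hAA
  have heq : K3deg G w = K3deg G u := by omega
  have : w = u := hinj w u heq
  subst this
  exact huA hwA

lemma endgame (hreg : G.IsRegularOfDegree 6)
    (hinj : ∀ u w : V, K3deg G u = K3deg G w → u = w)
    (hc : Fintype.card V = 13) (ht : ∀ v, K3deg G v ≤ 12) : False := by
  classical
  have himg : Finset.univ.image (K3deg G) = Finset.range 13 := by
    apply Finset.eq_of_subset_of_card_le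
    · intro x hx
      simp only [Finset.mem_image] at hx
      obtain ⟨v, _, hv⟩ := hx
      rw [Finset.mem_range]
      have := ht v
      omega
    · rw [Finset.card_range,
        Finset.card_image_of_injective _ (fun a b h => hinj a b h : Function.Injective (K3deg G)),
        Finset.card_univ, hc]
  have h12 : (12 : ℕ) ∈ Finset.univ.image (K3deg G) := by
    rw [himg]; simp
  obtain ⟨u, _, hu⟩ := Finset.mem_image.1 h12
  set B := BB G u with hB
  have huA : u ∉ G.neighborFinset u := by simp
  have hcardB : B.card = 6 := by
    rw [hB, BB, Finset.card_sdiff_of_subset (Finset.subset_univ _), Finset.card_insert_of_notMem huA,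
      SimpleGraph.card_neighborFinset_eq_degree, hreg u, Finset.card_univ, hc]
  have hstar := star' G hreg u
  rw [← hB, hcardB, hu] at hstar
  have hY : EP G B B = 30 := by omega
  have hterm : ∀ a ∈ B, (B.filter (fun b => G.Adj a b)).card ≤ 5 := by
    intro a ha
    have := EP_term_le (G := G) ha
    omega
  have hall : ∀ a ∈ B, (B.filter (fun b => G.Adj a b)).card = 5 := by
    by_contra hno
    push_neg at hno
    obtain ⟨a, ha, hne⟩ := hno
    have hlt : EP G B B < ∑ _a ∈ B, 5 :=
      Finset.sum_lt_sum hterm ⟨a, ha, by have := hterm a ha; omega⟩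
    rw [Finset.sum_const, smul_eq_mul, hcardB] at hlt
    omega
  have hBsub : ∀ a ∈ B, B.erase a ⊆ G.neighborFinset a := by
    intro a ha
    have heq : B.filter (fun b => G.Adj a b) = B.erase a := by
      apply Finset.eq_of_subset_of_card_le (filter_subset_erase G B a)
      rw [Finset.card_erase_of_mem ha, hcardB, hall a ha]
    rw [← heq]
    intro b hb
    simp only [mem_filter] at hb
    exact (SimpleGraph.mem_neighborFinset _ _ _).2 hb.2
  have huB : u ∉ B := by
    rw [hB, BB]
    simp
  have hw : ∀ w ∈ B, K3deg G w = 10 ∨ K3deg G w = 11 := by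
    intro w hwB
    have hsub := hBsub w hwB
    have hcarder : (B.erase w).card = 5 := by
      rw [Finset.card_erase_of_mem hwB, hcardB]
    have hd : ((G.neighborFinset w) \ (B.erase w)).card = 1 := by
      rw [Finset.card_sdiff_of_subset hsub, SimpleGraph.card_neighborFinset_eq_degree, hreg w, hcarder]
    obtain ⟨x, hx⟩ := Finset.card_eq_one.1 hd
    have hxmem : x ∈ G.neighborFinset w \ (B.erase w) := by
      rw [hx]; exact Finset.mem_singleton_self x
    have hxer : x ∉ B.erase w := (Finset.mem_sdiff.1 hxmem).2
    have hNw : G.neighborFinset w = insert x (B.erase w) := by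
      rw [Finset.insert_eq, ← hx, Finset.sdiff_union_of_subset hsub]
    have h2tw : 2 * K3deg G w
        = EP G (B.erase w) (B.erase w) + 2 * ((B.erase w).filter (fun b => G.Adj x b)).card := by
      rw [two_mul_K3deg G w, hNw, EP_insert_insert G hxer]
    have hEPer : EP G (B.erase w) (B.erase w) = 20 := by
      have hterms : ∀ a ∈ B.erase w, ((B.erase w).filter (fun b => G.Adj a b)).card = 4 := by
        intro a ha
        have haB : a ∈ B := Finset.mem_of_mem_erase ha
        have heq2 : (B.erase w).filter (fun b => G.Adj a b) = (B.erase w).erase a := by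
          apply Finset.Subset.antisymm
          · exact filter_subset_erase G _ a
          · intro b hb
            have hbBw : b ∈ B.erase w := Finset.mem_of_mem_erase hb
            have hbB : b ∈ B := Finset.mem_of_mem_erase hbBw
            have hba : b ≠ a := Finset.ne_of_mem_erase hb
            have hbw : b ≠ w := Finset.ne_of_mem_erase hbBw
            have : b ∈ B.erase a := Finset.mem_erase.2 ⟨hba, hbB⟩
            have := hBsub a haB this
            rw [SimpleGraph.mem_neighborFinset] at this
            exact Finset.mem_filter.2 ⟨hbBw, this⟩
        rw [heq2, Finset.card_erase_of_mem ha, hcarder]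
      rw [EP, Finset.sum_congr rfl hterms, Finset.sum_const, smul_eq_mul, hcarder]
    have hne12 : K3deg G w ≠ 12 := by
      intro h
      have : w = u := hinj w u (by rw [h, hu])
      exact huB (this ▸ hwB)
    have htw := ht w
    omega
  have hmapsto : ∀ w ∈ B, K3deg G w ∈ ({10, 11} : Finset ℕ) := by
    intro w hwB
    rcases hw w hwB with h | h <;> simp [h]
  have hle := Finset.card_le_card_of_injOn (K3deg G) hmapsto (fun a _ b _ h => hinj a b h)
  rw [hcardB] at hle
  have : ({10, 11} : Finset ℕ).card = 2 := by decide
  omega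

end K3x

theorem stmt14 (r : ℕ) (hr1 : 1 ≤ r) (hr6 : r ≤ 6) :
    ∀ (V : Type*) [Fintype V] [DecidableEq V] (G : SimpleGraph V) [DecidableRel G.Adj],
      2 ≤ Fintype.card V → G.IsRegularOfDegree r →
      ¬ (∀ u w : V, K3deg G u = K3deg G w → u = w) := by
  intro V _ _ G _ hcard hreg hinj
  classical
  obtain ⟨v₀⟩ : Nonempty V := Fintype.card_pos_iff.mp (by omega)
  have hnr : r + 1 ≤ Fintype.card V := by
    have h1 := G.degree_lt_card_verts v₀
    have h2 := hreg v₀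
    omega
  have hmax : ∀ m : ℕ, (∀ v, K3deg G v ≤ m) → Fintype.card V ≤ m + 1 := by
    intro m hm
    have hinj2 : Function.Injective (fun v => (⟨K3deg G v, by have := hm v; omega⟩ : Fin (m+1))) :=
      fun a b h => hinj a b (by simpa using h)
    simpa using Fintype.card_le_of_injective _ hinj2
  have htle : ∀ v, 2 * K3deg G v ≤ r * (r - 1) := by
    intro v
    rw [K3x.two_mul_K3deg]
    have := K3x.EP_self_le G (G.neighborFinset v)
    rwa [SimpleGraph.card_neighborFinset_eq_degree, hreg v] at this
  -- B-side machinery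
  have hcardB : ∀ v : V, (K3x.BB G v).card = Fintype.card V - (r + 1) := by
    intro v
    rw [K3x.BB, Finset.card_sdiff_of_subset (Finset.subset_univ _), Finset.card_insert_of_notMem (by simp),
      SimpleGraph.card_neighborFinset_eq_degree, hreg v, Finset.card_univ]
  have hstar : ∀ v : V, r * r + K3x.EP G (K3x.BB G v) (K3x.BB G v)
      = (Fintype.card V - (r + 1)) * r + r + 2 * K3deg G v := by
    intro v
    have := K3x.star' G hreg v
    rwa [hcardB v] at this
  have hYeven : ∀ v : V, Even (K3x.EP G (K3x.BB G v) (K3x.BB G v)) :=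
    fun v => K3x.EP_self_even G _
  have hYle : ∀ v : V, K3x.EP G (K3x.BB G v) (K3x.BB G v)
      ≤ (Fintype.card V - (r + 1)) * (Fintype.card V - (r + 1) - 1) := by
    intro v
    have := K3x.EP_self_le G (K3x.BB G v)
    rwa [hcardB v] at this
  have hYinj : Function.Injective (fun v => K3x.EP G (K3x.BB G v) (K3x.BB G v)) := by
    intro a b h
    simp only at h
    apply hinj
    have h1 := hstar a
    have h2 := hstar b
    set K := (Fintype.card V - (r + 1)) * r with hK
    omega
  have hAbound : Fintype.card V ≤
      (Fintype.card V - (r + 1)) * (Fintype.card V - (r + 1) - 1) / 2 + 1 := by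
    set M := (Fintype.card V - (r + 1)) * (Fintype.card V - (r + 1) - 1) with hM
    have hg : ∀ v, K3x.EP G (K3x.BB G v) (K3x.BB G v) / 2 < M / 2 + 1 := by
      intro v
      have h1 := hYle v
      have := Nat.div_le_div_right (c := 2) h1
      omega
    have hginj : Function.Injective
        (fun v => (⟨K3x.EP G (K3x.BB G v) (K3x.BB G v) / 2, hg v⟩ : Fin (M / 2 + 1))) := by
      intro a b h
      simp only [Fin.mk.injEq] at h
      obtain ⟨ka, hka⟩ := hYeven a
      obtain ⟨kb, hkb⟩ := hYeven b
      apply hYinj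
      simp only
      omega
    simpa using Fintype.card_le_of_injective _ hginj
  interval_cases r
  · -- r = 1
    have := hmax 0 (fun v => by have := htle v; omega)
    omega
  · -- r = 2
    have := hmax 1 (fun v => by have := htle v; omega)
    omega
  · -- r = 3
    have h4 := hmax 3 (fun v => by have := htle v; omega)
    have hval : Fintype.card V = 4 := by omega
    rw [hval] at hAbound
    norm_num at hAbound
  · -- r = 4
    have h7 := hmax 6 (fun v => by have := htle v; omega)
    have hval : Fintype.card V = 5 ∨ Fintype.card V = 6 ∨ Fintype.card V = 7 := by omega
    rcases hval with h | h | h <;> rw [h] at hAbound <;> norm_num at hAbound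
  · -- r = 5
    have h11 := hmax 10 (fun v => by have := htle v; omega)
    have hval : Fintype.card V = 6 ∨ Fintype.card V = 7 ∨ Fintype.card V = 8 ∨
        Fintype.card V = 9 ∨ Fintype.card V = 10 ∨ Fintype.card V = 11 := by omega
    rcases hval with h | h | h | h | h | h
    · rw [h] at hAbound; norm_num at hAbound
    · rw [h] at hAbound; norm_num at hAbound
    · rw [h] at hAbound; norm_num at hAbound
    · rw [h] at hAbound; norm_num at hAbound
    · rw [h] at hAbound; norm_num at hAbound
    · -- card = 11 : parity
      have hp := hstar v₀
      obtain ⟨k, hk⟩ := hYeven v₀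
      rw [h] at hp
      norm_num at hp
      omega
  · -- r = 6
    have ht12 : ∀ v, K3deg G v ≤ 12 := K3x.t_le_12 G hreg hinj
    have h13 := hmax 12 ht12
    have hval : Fintype.card V = 7 ∨ Fintype.card V = 8 ∨ Fintype.card V = 9 ∨
        Fintype.card V = 10 ∨ Fintype.card V = 11 ∨ Fintype.card V = 12 ∨
        Fintype.card V = 13 := by omega
    rcases hval with h | h | h | h | h | h | h
    · rw [h] at hAbound; norm_num at hAbound
    · rw [h] at hAbound; norm_num at hAbound
    · rw [h] at hAbound; norm_num at hAbound
    · rw [h] at hAbound; norm_num at hAbound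
    · rw [h] at hAbound; norm_num at hAbound
    · rw [h] at hAbound; norm_num at hAbound
    · exact K3x.endgame G hreg hinj h ht12
end

section
/- There is no 7-regular K3-irregular simple graph. -/
open Finset

set_option linter.unusedSectionVars false

namespace NoK3

variable {V : Type*} [Fintype V] [DecidableEq V]

section basic
variable (G : SimpleGraph V) [DecidableRel G.Adj]

/-- Number of ordered adjacent pairs within `s`. -/
def ein (s : Finset V) : ℕ := ∑ u ∈ s, #(s ∩ G.neighborFinset u)

lemma inter_nbr_eq_filter (s : Finset V) (u : V) :
    s ∩ G.neighborFinset u = (s.erase u).filter (fun w => G.Adj u w) := by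
  ext w
  simp only [Finset.mem_inter, SimpleGraph.mem_neighborFinset, Finset.mem_filter,
    Finset.mem_erase]
  constructor
  · rintro ⟨hs, ha⟩; exact ⟨⟨ha.ne', hs⟩, ha⟩
  · rintro ⟨⟨_, hs⟩, ha⟩; exact ⟨hs, ha⟩

lemma ein_mono {s t : Finset V} (h : s ⊆ t) : ein G s ≤ ein G t := by
  calc ein G s ≤ ∑ u ∈ s, #(t ∩ G.neighborFinset u) := by
        refine Finset.sum_le_sum fun u _ => Finset.card_le_card ?_
        exact Finset.inter_subset_inter_right h
    _ ≤ ein G t := Finset.sum_le_sum_of_subset h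

lemma ein_insert {s : Finset V} {a : V} (ha : a ∉ s) :
    ein G (insert a s) = ein G s + 2 * #(s ∩ G.neighborFinset a) := by
  unfold ein
  rw [Finset.sum_insert ha]
  have h1 : insert a s ∩ G.neighborFinset a = s ∩ G.neighborFinset a := by
    rw [Finset.insert_inter_of_notMem]
    simp [SimpleGraph.mem_neighborFinset]
  have h2 : ∀ u ∈ s, #(insert a s ∩ G.neighborFinset u)
      = #(s ∩ G.neighborFinset u) + (if a ∈ G.neighborFinset u then 1 else 0) := by
    intro u _
    by_cases hau : a ∈ G.neighborFinset u
    · rw [Finset.insert_inter_of_mem hau, Finset.card_insert_of_notMem (by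
        simp only [Finset.mem_inter]; tauto), if_pos hau]
    · rw [Finset.insert_inter_of_notMem hau, if_neg hau]
      omega
  have h3 : s.filter (fun u => a ∈ G.neighborFinset u) = s ∩ G.neighborFinset a := by
    ext w
    simp only [Finset.mem_filter, Finset.mem_inter, SimpleGraph.mem_neighborFinset]
    rw [SimpleGraph.adj_comm]
  have h4 : (∑ x ∈ s, if a ∈ G.neighborFinset x then (1:ℕ) else 0)
      = #(s ∩ G.neighborFinset a) := by
    rw [← h3, ← Finset.card_filter]
  rw [Finset.sum_congr rfl h2, Finset.sum_add_distrib, h4, h1]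
  omega

lemma ein_erase {s : Finset V} {a : V} (ha : a ∈ s) :
    ein G (s.erase a) + 2 * #(s.erase a ∩ G.neighborFinset a) = ein G s := by
  conv_rhs => rw [← Finset.insert_erase ha]
  rw [ein_insert G (Finset.notMem_erase a s)]

lemma ein_empty : ein G ∅ = 0 := by simp [ein]

/-- In-out identity / inclusion–exclusion. -/
lemma ein_sdiff (T : Finset V) :
    ein G (univ \ T) + 2 * ∑ t ∈ T, G.degree t = ein G univ + ein G T := by
  classical
  induction T using Finset.induction with
  | empty => simp [ein_empty]
  | @insert a T haT ih =>
    have hEr : univ \ insert a T = (univ \ T).erase a := by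
      ext w
      simp only [Finset.mem_sdiff, Finset.mem_erase, Finset.mem_insert, Finset.mem_univ,
        true_and]
      tauto
    have haU : a ∈ univ \ T := by simp [haT]
    have h1 := ein_erase G haU
    have hX : #((univ \ T).erase a ∩ G.neighborFinset a) + #(T ∩ G.neighborFinset a)
        = G.degree a := by
      rw [← SimpleGraph.card_neighborFinset_eq_degree]
      rw [← Finset.card_union_of_disjoint (by
        refine Finset.disjoint_left.mpr ?_
        intro w hw hw2
        simp only [Finset.mem_inter, Finset.mem_erase, Finset.mem_sdiff] at hw hw2
        exact hw.1.2.2 hw2.1)]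
      congr 1
      ext w
      simp only [Finset.mem_union, Finset.mem_inter, Finset.mem_erase, Finset.mem_sdiff,
        Finset.mem_univ, true_and, SimpleGraph.mem_neighborFinset]
      constructor
      · rintro (⟨⟨h1, h2⟩, h3⟩ | ⟨h1, h2⟩) <;> tauto
      · intro hw
        by_cases hwT : w ∈ T
        · tauto
        · left
          refine ⟨⟨?_, hwT⟩, hw⟩
          rintro rfl; exact (G.irrefl hw)
    have h2 : ein G (insert a T) = ein G T + 2 * #(T ∩ G.neighborFinset a) :=
      ein_insert G haT
    rw [Finset.sum_insert haT, hEr, h2]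
    omega

lemma ein_univ : ein G univ = ∑ v, G.degree v := by
  unfold ein
  refine Finset.sum_congr rfl fun u _ => ?_
  rw [Finset.univ_inter, SimpleGraph.card_neighborFinset_eq_degree]

/-- Number of ordered non-adjacent (distinct) pairs within `s`. -/
def na (s : Finset V) : ℕ := ∑ u ∈ s, #((s.erase u).filter (fun w => ¬ G.Adj u w))

lemma na_mono {s t : Finset V} (h : s ⊆ t) : na G s ≤ na G t := by
  unfold na
  calc ∑ u ∈ s, #((s.erase u).filter (fun w => ¬ G.Adj u w))
      ≤ ∑ u ∈ s, #((t.erase u).filter (fun w => ¬ G.Adj u w)) := by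
        refine Finset.sum_le_sum fun u _ => Finset.card_le_card ?_
        exact Finset.filter_subset_filter _ (Finset.erase_subset_erase _ h)
    _ ≤ ∑ u ∈ t, #((t.erase u).filter (fun w => ¬ G.Adj u w)) :=
        Finset.sum_le_sum_of_subset h

lemma ein_add_na (s : Finset V) :
    ein G s + na G s = #s * (#s - 1) := by
  unfold na
  unfold ein
  rw [← Finset.sum_add_distrib]
  have : ∀ u ∈ s, #(s ∩ G.neighborFinset u) + #((s.erase u).filter (fun w => ¬ G.Adj u w))
      = #s - 1 := by
    intro u hu
    rw [inter_nbr_eq_filter, Finset.card_filter_add_card_filter_not,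
      Finset.card_erase_of_mem hu]
  rw [Finset.sum_congr rfl this, Finset.sum_const, smul_eq_mul]


/-- The bridge: ordered adjacent pairs inside a neighborhood = twice triangle degree. -/
lemma ein_nbr_eq (v : V) : ein G (G.neighborFinset v) = 2 * K3deg G v := by
  classical
  set s := G.neighborFinset v with hs
  set P := (s ×ˢ s).filter (fun p => G.Adj p.1 p.2) with hP
  set Tv := (G.cliqueFinset 3).filter (fun t => v ∈ t) with hTv
  -- step 1 : ein s = #P
  have step1 : ein G s = #P := by
    have hmaps : ∀ p ∈ P, p.1 ∈ s := by
      intro p hp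
      simp only [hP, Finset.mem_filter, Finset.mem_product] at hp
      exact hp.1.1
    rw [Finset.card_eq_sum_card_fiberwise hmaps]
    unfold ein
    refine Finset.sum_congr rfl fun u hu => ?_
    have : P.filter (fun p => p.1 = u) = {u} ×ˢ (s ∩ G.neighborFinset u) := by
      ext ⟨a, b⟩
      simp only [hP, Finset.mem_filter, Finset.mem_product, Finset.mem_singleton,
        Finset.mem_inter, SimpleGraph.mem_neighborFinset]
      constructor
      · rintro ⟨⟨⟨h1, h2⟩, h3⟩, rfl⟩; exact ⟨rfl, h2, h3⟩
      · rintro ⟨rfl, h2, h3⟩; exact ⟨⟨⟨hu, h2⟩, h3⟩, rfl⟩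
    rw [this, Finset.singleton_product, Finset.card_map]
  -- step 2 : #P = 2 * #Tv
  have hmaps2 : ∀ p ∈ P, insert v {p.1, p.2} ∈ Tv := by
    rintro ⟨a, b⟩ hp
    simp only [hP, Finset.mem_filter, Finset.mem_product] at hp
    obtain ⟨⟨ha, hb⟩, hab⟩ := hp
    rw [hs, SimpleGraph.mem_neighborFinset] at ha hb
    simp only [hTv, Finset.mem_filter, SimpleGraph.mem_cliqueFinset_iff]
    exact ⟨SimpleGraph.is3Clique_triple_iff.mpr ⟨ha, hb, hab⟩, Finset.mem_insert_self _ _⟩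
  have step2 : #P = ∑ t ∈ Tv, #(P.filter (fun p => insert v {p.1, p.2} = t)) :=
    Finset.card_eq_sum_card_fiberwise hmaps2
  have fib2 : ∀ t ∈ Tv, #(P.filter (fun p => insert v {p.1, p.2} = t)) = 2 := by
    intro t ht
    simp only [hTv, Finset.mem_filter, SimpleGraph.mem_cliqueFinset_iff] at ht
    obtain ⟨hcl, hvt⟩ := ht
    have hcard : #(t.erase v) = 2 := by
      rw [Finset.card_erase_of_mem hvt, hcl.card_eq]
    obtain ⟨a, b, hab, hab2⟩ := Finset.card_eq_two.mp hcard
    have hat : a ∈ t := Finset.mem_of_mem_erase (hab2 ▸ Finset.mem_insert_self a {b})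
    have hbt : b ∈ t := Finset.mem_of_mem_erase (hab2 ▸ (by simp : b ∈ ({a, b} : Finset V)))
    have hav : a ≠ v := Finset.ne_of_mem_erase (hab2 ▸ Finset.mem_insert_self a {b})
    have hbv : b ≠ v := Finset.ne_of_mem_erase (hab2 ▸ (by simp : b ∈ ({a, b} : Finset V)))
    have hpair : (t : Set V).Pairwise G.Adj := hcl.1
    have hvab : G.Adj v a := hpair hvt hat (Ne.symm hav)
    have hvbb : G.Adj v b := hpair hvt hbt (Ne.symm hbv)
    have haba : G.Adj a b := hpair hat hbt hab
    have htEq : insert v ({a, b} : Finset V) = t := by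
      rw [← hab2, Finset.insert_erase hvt]
    have : P.filter (fun p => insert v {p.1, p.2} = t) = {(a, b), (b, a)} := by
      ext ⟨x, y⟩
      simp only [hP, Finset.mem_filter, Finset.mem_product, Finset.mem_insert,
        Finset.mem_singleton, Prod.mk.injEq]
      constructor
      · rintro ⟨⟨⟨hx, hy⟩, hxy⟩, heq⟩
        rw [hs, SimpleGraph.mem_neighborFinset] at hx hy
        have hxt : x ∈ t.erase v := by
          rw [Finset.mem_erase]
          exact ⟨hx.ne', heq ▸ Finset.mem_insert_of_mem (Finset.mem_insert_self _ _)⟩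
        have hyt : y ∈ t.erase v := by
          rw [Finset.mem_erase]
          refine ⟨hy.ne', heq ▸ Finset.mem_insert_of_mem ?_⟩
          simp
        rw [hab2, Finset.mem_insert, Finset.mem_singleton] at hxt hyt
        have hxyne : x ≠ y := hxy.ne
        rcases hxt with rfl | rfl <;> rcases hyt with rfl | rfl <;> tauto
      · have hta : insert v ({b, a} : Finset V) = t := by
          rw [← htEq]
          congr 1
          exact Finset.pair_comm b a
        rintro (⟨hx, hy⟩ | ⟨hx, hy⟩) <;> rw [hx, hy] <;>
          simp only [hs, SimpleGraph.mem_neighborFinset]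
        · exact ⟨⟨⟨hvab, hvbb⟩, haba⟩, htEq⟩
        · exact ⟨⟨⟨hvbb, hvab⟩, haba.symm⟩, hta⟩
    rw [this, Finset.card_insert_of_notMem (by
      simp only [Finset.mem_singleton, Prod.mk.injEq]
      intro h
      exact hab h.1), Finset.card_singleton]
  rw [step1, step2, Finset.sum_congr rfl fib2, Finset.sum_const, smul_eq_mul, mul_comm]
  rfl


lemma card_nbr {r : ℕ} (hreg : G.IsRegularOfDegree r) (v : V) :
    #(G.neighborFinset v) = r := by
  rw [SimpleGraph.card_neighborFinset_eq_degree]; exact hreg v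

lemma sum_K3deg : ∑ v, K3deg G v = 3 * #(G.cliqueFinset 3) := by
  unfold K3deg
  have h1 : ∀ v : V, #((G.cliqueFinset 3).filter (fun t => v ∈ t))
      = ∑ t ∈ G.cliqueFinset 3, if v ∈ t then 1 else 0 := fun v => Finset.card_filter _ _
  rw [Finset.sum_congr rfl (fun v _ => h1 v), Finset.sum_comm]
  have h2 : ∀ t ∈ G.cliqueFinset 3, (∑ v : V, if v ∈ t then (1:ℕ) else 0) = 3 := by
    intro t ht
    rw [← Finset.card_filter]
    have : univ.filter (fun v => v ∈ t) = t := by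
      ext w; simp
    rw [this, (SimpleGraph.mem_cliqueFinset_iff.mp ht).card_eq]
  rw [Finset.sum_congr rfl h2, Finset.sum_const, smul_eq_mul, mul_comm]

section inj
variable {G} {r : ℕ}
variable (hinj : ∀ u w : V, K3deg G u = K3deg G w → u = w)
  (hreg : G.IsRegularOfDegree r)

include hinj hreg in
lemma codeg_le {u v : V} (huv : G.Adj u v) :
    #(G.neighborFinset u ∩ G.neighborFinset v) + 2 ≤ r := by
  set C := G.neighborFinset u ∩ G.neighborFinset v with hC
  have hCu : C ⊆ (G.neighborFinset u).erase v := by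
    intro w hw
    rw [hC, Finset.mem_inter, SimpleGraph.mem_neighborFinset,
      SimpleGraph.mem_neighborFinset] at hw
    rw [Finset.mem_erase, SimpleGraph.mem_neighborFinset]
    exact ⟨hw.2.ne', hw.1⟩
  have hCv : C ⊆ (G.neighborFinset v).erase u := by
    intro w hw
    rw [hC, Finset.mem_inter, SimpleGraph.mem_neighborFinset,
      SimpleGraph.mem_neighborFinset] at hw
    rw [Finset.mem_erase, SimpleGraph.mem_neighborFinset]
    exact ⟨hw.1.ne', hw.2⟩
  have hr : 1 ≤ r := by
    have := card_nbr _ hreg u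
    have hv : v ∈ G.neighborFinset u := by
      rw [SimpleGraph.mem_neighborFinset]; exact huv
    have := Finset.card_pos.mpr ⟨v, hv⟩
    omega
  have hcardu : #((G.neighborFinset u).erase v) = r - 1 := by
    rw [Finset.card_erase_of_mem (by rw [SimpleGraph.mem_neighborFinset]; exact huv),
      card_nbr _ hreg u]
  have hcardv : #((G.neighborFinset v).erase u) = r - 1 := by
    rw [Finset.card_erase_of_mem (by rw [SimpleGraph.mem_neighborFinset]; exact huv.symm),
      card_nbr _ hreg v]
  by_contra hcon
  have hCcard : #C = r - 1 := by
    have := Finset.card_le_card hCu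
    omega
  have hEqu : C = (G.neighborFinset u).erase v :=
    Finset.eq_of_subset_of_card_le hCu (by omega)
  have hEqv : C = (G.neighborFinset v).erase u :=
    Finset.eq_of_subset_of_card_le hCv (by omega)
  have keyu : ein G (G.neighborFinset u) = ein G C + 2 * #C := by
    have h1 := ein_erase G (s := G.neighborFinset u)
      (a := v) (by rw [SimpleGraph.mem_neighborFinset]; exact huv)
    rw [← hEqu] at h1
    have h2 : C ∩ G.neighborFinset v = C := by
      refine Finset.inter_eq_left.mpr ?_
      rw [hC]; exact Finset.inter_subset_right
    rw [h2] at h1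
    omega
  have keyv : ein G (G.neighborFinset v) = ein G C + 2 * #C := by
    have h1 := ein_erase G (s := G.neighborFinset v)
      (a := u) (by rw [SimpleGraph.mem_neighborFinset]; exact huv.symm)
    rw [← hEqv] at h1
    have h2 : C ∩ G.neighborFinset u = C := by
      refine Finset.inter_eq_left.mpr ?_
      rw [hC]; exact Finset.inter_subset_left
    rw [h2] at h1
    omega
  have : K3deg G u = K3deg G v := by
    have hu := ein_nbr_eq G u
    have hv := ein_nbr_eq G v
    omega
  exact huv.ne (hinj u v this)

include hinj hreg in
lemma K3deg_bound (v : V) : 2 * K3deg G v + 2 * r ≤ r * r := by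
  have h1 : ein G (G.neighborFinset v) = 2 * K3deg G v := ein_nbr_eq G v
  have h2 : ∀ u ∈ G.neighborFinset v,
      #(G.neighborFinset v ∩ G.neighborFinset u) + 2 ≤ r := by
    intro u hu
    rw [SimpleGraph.mem_neighborFinset] at hu
    exact codeg_le hinj hreg hu
  have h3 : (∑ u ∈ G.neighborFinset v, (#(G.neighborFinset v ∩ G.neighborFinset u) + 2))
      ≤ ∑ _u ∈ G.neighborFinset v, r := Finset.sum_le_sum h2
  rw [Finset.sum_add_distrib, Finset.sum_const, smul_eq_mul, Finset.sum_const, smul_eq_mul,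
    card_nbr _ hreg v] at h3
  unfold ein at h1
  omega

include hinj in
lemma pigeon (F : Finset ℕ) (hmap : ∀ v : V, K3deg G v ∈ F)
    (hcard : #F < Fintype.card V) : False := by
  obtain ⟨x, _, y, _, hxy, he⟩ := Finset.exists_ne_map_eq_of_card_lt_of_maps_to
    (by rwa [Finset.card_univ]) (fun a _ => hmap a)
  exact hxy (hinj x y he)

end inj

lemma K3deg_formula (hreg : G.IsRegularOfDegree 7) (x : V) :
    2 * K3deg G x + 14 * (Fintype.card V - 7) =
      7 * Fintype.card V + ein G (univ \ insert x (G.neighborFinset x)) := by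
  have h := ein_sdiff G (univ \ G.neighborFinset x)
  have e1 : univ \ (univ \ G.neighborFinset x) = G.neighborFinset x := by
    rw [Finset.sdiff_sdiff_self_left, Finset.univ_inter]
  have e2 : ∑ t ∈ univ \ G.neighborFinset x, G.degree t = 7 * (Fintype.card V - 7) := by
    rw [Finset.sum_congr rfl (fun t _ => hreg t), Finset.sum_const, smul_eq_mul, mul_comm]
    congr 1
    rw [Finset.card_sdiff_of_subset (Finset.subset_univ _), Finset.card_univ, card_nbr G hreg]
  have e3 : univ \ G.neighborFinset x = insert x (univ \ insert x (G.neighborFinset x)) := by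
    ext w
    simp only [Finset.mem_sdiff, Finset.mem_univ, true_and, Finset.mem_insert]
    by_cases hwx : w = x
    · subst hwx
      simp [SimpleGraph.mem_neighborFinset]
    · tauto
  have e4 : ein G (univ \ G.neighborFinset x)
      = ein G (univ \ insert x (G.neighborFinset x)) := by
    rw [e3, ein_insert G (by simp)]
    have : (univ \ insert x (G.neighborFinset x)) ∩ G.neighborFinset x = ∅ := by
      ext w
      simp only [Finset.mem_inter, Finset.mem_sdiff, Finset.mem_univ, true_and,
        Finset.mem_insert, Finset.notMem_empty, iff_false]
      tauto
    rw [this]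
    simp
  rw [e1, e2, e4, ein_univ, Finset.sum_congr rfl (fun t _ => hreg t), Finset.sum_const,
    smul_eq_mul, Finset.card_univ, mul_comm] at h
  rw [← ein_nbr_eq]
  omega


section seventeen
variable {G} (hinj : ∀ u w : V, K3deg G u = K3deg G w → u = w)
  (hreg : G.IsRegularOfDegree 7)

include hinj hreg in
lemma no17 (v : V) : K3deg G v ≠ 17 := by
  intro h17
  set s := G.neighborFinset v with hs
  have hcards : #s = 7 := card_nbr _ hreg v
  have heins : ein G s = 34 := by rw [hs, ein_nbr_eq, h17]
  have hcoord : ∀ u ∈ s, #(s ∩ G.neighborFinset u) + 2 ≤ 7 := by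
    intro u hu
    rw [hs, SimpleGraph.mem_neighborFinset] at hu
    exact codeg_le hinj hreg hu
  set F := s.filter (fun u => #(s ∩ G.neighborFinset u) = 5) with hF
  have hFs : F ⊆ s := Finset.filter_subset _ _
  have hFcard : 6 ≤ #F := by
    by_contra hcon
    have hsplit := Finset.sum_filter_add_sum_filter_not s
      (fun u => #(s ∩ G.neighborFinset u) = 5) (fun u => #(s ∩ G.neighborFinset u))
    rw [← hF] at hsplit
    have hTot : (∑ x ∈ s, #(s ∩ G.neighborFinset x)) = 34 := heins
    have hb1 : ∑ x ∈ F, #(s ∩ G.neighborFinset x) ≤ 5 * #F := by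
      rw [mul_comm]
      refine Finset.sum_le_card_nsmul _ _ 5 ?_
      intro u hu
      rw [hF, Finset.mem_filter] at hu
      omega
    have hc : #(s.filter (fun u => ¬ #(s ∩ G.neighborFinset u) = 5)) = 7 - #F := by
      have := Finset.card_filter_add_card_filter_not
        (s := s) (p := fun u => #(s ∩ G.neighborFinset u) = 5)
      rw [← hF] at this
      omega
    have hb2 : ∑ x ∈ s.filter (fun u => ¬ #(s ∩ G.neighborFinset u) = 5),
        #(s ∩ G.neighborFinset x) ≤ 4 * (7 - #F) := by
      rw [mul_comm, ← hc]
      refine Finset.sum_le_card_nsmul _ _ 4 ?_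
      intro u hu
      rw [Finset.mem_filter] at hu
      have h5 := hcoord u hu.1
      have hne := hu.2
      omega
    omega
  have hKu : ∀ u ∈ F, 12 ≤ K3deg G u := by
    intro u huF
    have hu : u ∈ s := hFs huF
    have hco5 : #(s ∩ G.neighborFinset u) = 5 := by
      rw [hF, Finset.mem_filter] at huF; exact huF.2
    have hadjvu : G.Adj v u := by rwa [hs, SimpleGraph.mem_neighborFinset] at hu
    set C := s ∩ G.neighborFinset u with hC
    have hCs : C ⊆ s.erase u := by
      intro w hw
      rw [hC] at hw
      have hw1 : w ∈ s := Finset.mem_of_mem_inter_left hw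
      have hw2 : G.Adj u w := by
        have h := Finset.mem_of_mem_inter_right hw
        rwa [SimpleGraph.mem_neighborFinset] at h
      exact Finset.mem_erase.mpr ⟨hw2.ne', hw1⟩
    have hein' : ein G (s.erase u) = 24 := by
      have h1 := ein_erase G (s := s) (a := u) hu
      have h2 : s.erase u ∩ G.neighborFinset u = C := by
        rw [hC]
        ext w
        simp only [Finset.mem_inter, Finset.mem_erase, SimpleGraph.mem_neighborFinset]
        constructor
        · rintro ⟨⟨_, h⟩, h2⟩; exact ⟨h, h2⟩
        · rintro ⟨h1, h2⟩; exact ⟨⟨h2.ne', h1⟩, h2⟩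
      rw [h2, hco5] at h1
      omega
    obtain ⟨w, hwD⟩ : ∃ w, s.erase u \ C = {w} := by
      refine Finset.card_eq_one.mp ?_
      rw [Finset.card_sdiff_of_subset hCs, Finset.card_erase_of_mem hu, hcards, hco5]
    have hsplit : s.erase u = insert w C := by
      have := Finset.union_sdiff_of_subset hCs
      rw [hwD] at this
      rw [← this, Finset.union_comm]
      rfl
    have hwC : w ∉ C := by
      have : w ∈ s.erase u \ C := by rw [hwD]; exact Finset.mem_singleton_self w
      exact (Finset.mem_sdiff.mp this).2
    have heinC : 14 ≤ ein G C := by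
      have h1 : ein G (s.erase u) = ein G C + 2 * #(C ∩ G.neighborFinset w) :=
        hsplit ▸ ein_insert G hwC
      have h2 : #(C ∩ G.neighborFinset w) ≤ 5 := by
        calc #(C ∩ G.neighborFinset w) ≤ #C := Finset.card_le_card Finset.inter_subset_left
        _ = 5 := by rw [hC]; exact hco5
      omega
    have hsubnbr : insert v C ⊆ G.neighborFinset u := by
      intro x hx
      rw [Finset.mem_insert] at hx
      rcases hx with rfl | hx
      · rw [SimpleGraph.mem_neighborFinset]; exact hadjvu.symm
      · rw [hC] at hx
        exact Finset.mem_of_mem_inter_right hx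
    have hvC : v ∉ C := by
      intro hv
      rw [hC] at hv
      have h := Finset.mem_of_mem_inter_left hv
      rw [hs, SimpleGraph.mem_neighborFinset] at h
      exact G.irrefl h
    have hCnbrv : #(C ∩ G.neighborFinset v) = 5 := by
      have : C ∩ G.neighborFinset v = C := by
        refine Finset.inter_eq_left.mpr ?_
        rw [hC, hs]
        exact Finset.inter_subset_left
      rw [this, hC]
      exact hco5
    have hfinal : 24 ≤ ein G (G.neighborFinset u) := by
      calc (24:ℕ) ≤ ein G C + 2 * 5 := by omega
      _ = ein G (insert v C) := by rw [ein_insert G hvC, hCnbrv]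
      _ ≤ ein G (G.neighborFinset u) := ein_mono G hsubnbr
    have := ein_nbr_eq G u
    omega
  -- pigeonhole
  have hvF : v ∉ F := by
    intro hv
    have : v ∈ s := hFs hv
    rw [hs, SimpleGraph.mem_neighborFinset] at this
    exact G.irrefl this
  have hTcard : 7 ≤ #(insert v F) := by
    rw [Finset.card_insert_of_notMem hvF]
    omega
  have hmaps : ∀ x ∈ insert v F, K3deg G x ∈ Finset.Icc 12 17 := by
    intro x hx
    rw [Finset.mem_insert] at hx
    rw [Finset.mem_Icc]
    have hbd := K3deg_bound hinj hreg x
    rcases hx with rfl | hx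
    · omega
    · have := hKu x hx
      omega
  have hIcc : #(Finset.Icc 12 17) = 6 := by decide
  obtain ⟨x, _, y, _, hxy, he⟩ :=
    Finset.exists_ne_map_eq_of_card_lt_of_maps_to (by omega) hmaps
  exact hxy (hinj x y he)

end seventeen

/-- coordinate bound: for `u` a neighbor of `v`, the codegree is at most `K3deg u`. -/
lemma coord_le_K3deg {v u : V} (hu : u ∈ G.neighborFinset v) :
    #(G.neighborFinset v ∩ G.neighborFinset u) ≤ K3deg G u := by
  set C := G.neighborFinset v ∩ G.neighborFinset u with hC
  have hadj : G.Adj v u := by rwa [SimpleGraph.mem_neighborFinset] at hu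
  have hvC : v ∉ C := by
    intro hv
    have h := Finset.mem_of_mem_inter_left (hC ▸ hv)
    rw [SimpleGraph.mem_neighborFinset] at h
    exact G.irrefl h
  have hsub : insert v C ⊆ G.neighborFinset u := by
    intro x hx
    rw [Finset.mem_insert] at hx
    rcases hx with rfl | hx
    · rw [SimpleGraph.mem_neighborFinset]; exact hadj.symm
    · exact Finset.mem_of_mem_inter_right (hC ▸ hx)
  have h1 : ein G (insert v C) = ein G C + 2 * #(C ∩ G.neighborFinset v) :=
    ein_insert G hvC
  have h2 : C ∩ G.neighborFinset v = C := by
    refine Finset.inter_eq_left.mpr ?_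
    rw [hC]; exact Finset.inter_subset_left
  have h3 : ein G (insert v C) ≤ ein G (G.neighborFinset u) := ein_mono G hsub
  have h4 := ein_nbr_eq G u
  rw [h2] at h1
  omega

lemma sum_lb (O : Finset V) (f : V → ℕ) (L : Finset V) (hL : L ⊆ O)
    (hone : ∀ o ∈ O, 1 ≤ f o) :
    ∑ x ∈ L, f x + (#O - #L) ≤ ∑ o ∈ O, f o := by
  have h1 := Finset.sum_sdiff (f := f) hL
  have h2 : #(O \ L) • 1 ≤ ∑ x ∈ O \ L, f x :=
    Finset.card_nsmul_le_sum _ _ 1 (fun x hx => hone x (Finset.mem_sdiff.mp hx).1)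
  rw [Finset.card_sdiff_of_subset hL] at h2
  have h3 := Finset.card_le_card hL
  simp only [smul_eq_mul, mul_one] at h2
  omega


lemma cardA (hreg : G.IsRegularOfDegree 7) (x : V) :
    #(univ \ insert x (G.neighborFinset x)) = Fintype.card V - 8 := by
  rw [Finset.card_sdiff_of_subset (Finset.subset_univ _), Finset.card_univ,
    Finset.card_insert_of_notMem (G.notMem_neighborFinset_self x), card_nbr _ hreg]

lemma ein_compl_eq_na [DecidableRel Gᶜ.Adj] (s : Finset V) : ein Gᶜ s = na G s := by
  unfold ein na
  refine Finset.sum_congr rfl fun u hu => ?_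
  congr 1
  ext w
  simp only [Finset.mem_inter, SimpleGraph.mem_neighborFinset, SimpleGraph.compl_adj,
    Finset.mem_filter, Finset.mem_erase]
  constructor
  · rintro ⟨hw, hne, hna⟩; exact ⟨⟨hne.symm, hw⟩, hna⟩
  · rintro ⟨⟨hne, hw⟩, hna⟩; exact ⟨hw, hne.symm, hna⟩

lemma sum3 {a b c : V} (f : V → ℕ) (hab : a ≠ b) (hac : a ≠ c) (hbc : b ≠ c) :
    ∑ x ∈ ({a, b, c} : Finset V), f x = f a + f b + f c := by
  rw [Finset.sum_insert (by simp [hab, hac]), Finset.sum_insert (by simp [hbc]),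
    Finset.sum_singleton, add_assoc]

lemma card3 {a b c : V} (hab : a ≠ b) (hac : a ≠ c) (hbc : b ≠ c) :
    #({a, b, c} : Finset V) = 3 := by
  rw [Finset.card_insert_of_notMem (by simp [hab, hac]),
    Finset.card_insert_of_notMem (by simp [hbc]), Finset.card_singleton]

lemma sum4 {a b c d : V} (f : V → ℕ) (hab : a ≠ b) (hac : a ≠ c) (had : a ≠ d)
    (hbc : b ≠ c) (hbd : b ≠ d) (hcd : c ≠ d) :
    ∑ x ∈ ({a, b, c, d} : Finset V), f x = f a + (f b + f c + f d) := by
  rw [Finset.sum_insert (by simp [hab, hac, had]), sum3 f hbc hbd hcd]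

lemma card4 {a b c d : V} (hab : a ≠ b) (hac : a ≠ c) (had : a ≠ d)
    (hbc : b ≠ c) (hbd : b ≠ d) (hcd : c ≠ d) :
    #({a, b, c, d} : Finset V) = 4 := by
  rw [Finset.card_insert_of_notMem (by simp [hab, hac, had]), card3 hbc hbd hcd]

lemma sum5 {a b c d e : V} (f : V → ℕ) (hab : a ≠ b) (hac : a ≠ c) (had : a ≠ d)
    (hae : a ≠ e) (hbc : b ≠ c) (hbd : b ≠ d) (hbe : b ≠ e) (hcd : c ≠ d) (hce : c ≠ e)
    (hde : d ≠ e) :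
    ∑ x ∈ ({a, b, c, d, e} : Finset V), f x = f a + (f b + (f c + f d + f e)) := by
  rw [Finset.sum_insert (by simp [hab, hac, had, hae]), sum4 f hbc hbd hbe hcd hce hde]

lemma card5 {a b c d e : V} (hab : a ≠ b) (hac : a ≠ c) (had : a ≠ d)
    (hae : a ≠ e) (hbc : b ≠ c) (hbd : b ≠ d) (hbe : b ≠ e) (hcd : c ≠ d) (hce : c ≠ e)
    (hde : d ≠ e) :
    #({a, b, c, d, e} : Finset V) = 5 := by
  rw [Finset.card_insert_of_notMem (by simp [hab, hac, had, hae]),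
    card4 hbc hbd hbe hcd hce hde]

section sixteen
variable {G} (hinj : ∀ u w : V, K3deg G u = K3deg G w → u = w)
  (hreg : G.IsRegularOfDegree 7) (hn : Fintype.card V = 16)
variable {v : V}

include hreg hn in
lemma cardO : #(univ \ insert v (G.neighborFinset v)) = 8 := by
  rw [Finset.card_sdiff_of_subset (Finset.subset_univ _), Finset.card_univ, hn,
    Finset.card_insert_of_notMem (G.notMem_neighborFinset_self v), card_nbr _ hreg]

include hreg hn in
lemma einO : ein G (univ \ insert v (G.neighborFinset v)) = 2 * K3deg G v + 14 := by
  have h := K3deg_formula G hreg v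
  rw [hn] at h
  omega

include hreg in
lemma cross_split (o : V) (S : Finset V) :
    #(G.neighborFinset o ∩ S) + #(G.neighborFinset o ∩ (univ \ S)) = 7 := by
  have h1 : G.neighborFinset o ∩ (univ \ S) = G.neighborFinset o \ S := by
    ext w
    simp only [Finset.mem_inter, Finset.mem_sdiff, Finset.mem_univ, true_and]
  rw [h1, Finset.card_inter_add_card_sdiff, card_nbr _ hreg]

include hinj hreg hn in
lemma cross_pos (o : V) (ho : o ∈ univ \ insert v (G.neighborFinset v)) :
    1 ≤ #(G.neighborFinset o ∩ insert v (G.neighborFinset v)) := by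
  set S := insert v (G.neighborFinset v) with hS
  set O := univ \ S with hO
  by_contra hcon
  have hempty : G.neighborFinset o ∩ S = ∅ := by
    have : #(G.neighborFinset o ∩ S) = 0 := by omega
    exact Finset.card_eq_zero.mp this
  have hsub : G.neighborFinset o ⊆ O.erase o := by
    intro w hw
    rw [Finset.mem_erase]
    constructor
    · intro hwo; rw [hwo] at hw; exact G.notMem_neighborFinset_self o hw
    · rw [hO, Finset.mem_sdiff]
      refine ⟨Finset.mem_univ w, fun hwS => ?_⟩
      have : w ∈ G.neighborFinset o ∩ S := Finset.mem_inter.mpr ⟨hw, hwS⟩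
      rw [hempty] at this
      exact Finset.notMem_empty w this
  have hcardO8 : #O = 8 := cardO hreg hn
  have hoO : o ∈ O := ho
  have hcards : #(O.erase o) = 7 := by rw [Finset.card_erase_of_mem hoO]; omega
  have heq : G.neighborFinset o = O.erase o :=
    Finset.eq_of_subset_of_card_le hsub (by rw [hcards, card_nbr _ hreg])
  have h1 := ein_erase G (s := O) (a := o) hoO
  have h2 : O.erase o ∩ G.neighborFinset o = G.neighborFinset o := by
    rw [heq, Finset.inter_self]
  rw [h2, card_nbr _ hreg, ← heq] at h1
  have h4 := ein_nbr_eq G o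
  have h5 : ein G O = 2 * K3deg G v + 14 := einO hreg hn
  have h6 : K3deg G o = K3deg G v := by omega
  have := hinj o v h6
  subst this
  rw [hO, hS, Finset.mem_sdiff] at ho
  exact ho.2 (Finset.mem_insert_self o _)

include hreg in
lemma Mout (S : Finset V) (hcard : #(univ \ S) = 8) :
    ∑ o ∈ univ \ S, #(G.neighborFinset o ∩ S) + ein G (univ \ S) = 56 := by
  have h1 : ∀ o ∈ univ \ S,
      #(G.neighborFinset o ∩ S) + #((univ \ S) ∩ G.neighborFinset o) = 7 := by
    intro o _
    have := cross_split hreg o S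
    rw [Finset.inter_comm (G.neighborFinset o) (univ \ S)] at this
    exact this
  have h2 : ∑ o ∈ univ \ S,
      (#(G.neighborFinset o ∩ S) + #((univ \ S) ∩ G.neighborFinset o)) = 56 := by
    rw [Finset.sum_congr rfl h1, Finset.sum_const, smul_eq_mul, hcard]
  rw [Finset.sum_add_distrib] at h2
  unfold ein
  omega


include hinj hreg hn in
lemma case16_top {v z : V} (hv : K3deg G v = 16) (hz : K3deg G z = 0) : False := by
  have hcards : #(G.neighborFinset v) = 7 := card_nbr _ hreg v
  have heins : ein G (G.neighborFinset v) = 32 := by rw [ein_nbr_eq, hv]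
  have hzv : z ≠ v := by
    intro h; rw [h, hv] at hz; omega
  have hzs : z ∉ G.neighborFinset v := by
    intro hzs
    have hle : #(G.neighborFinset v ∩ G.neighborFinset z) ≤ K3deg G z :=
      coord_le_K3deg (G := G) hzs
    rw [hz] at hle
    have hsum : ∑ u ∈ G.neighborFinset v, #(G.neighborFinset v ∩ G.neighborFinset u) = 32 :=
      heins
    have hrest : ∑ u ∈ (G.neighborFinset v).erase z,
        #(G.neighborFinset v ∩ G.neighborFinset u) ≤ 30 := by
      have hb : ∀ u ∈ (G.neighborFinset v).erase z,
          #(G.neighborFinset v ∩ G.neighborFinset u) ≤ 5 := by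
        intro u hu
        have hu2 : u ∈ G.neighborFinset v := Finset.mem_of_mem_erase hu
        rw [SimpleGraph.mem_neighborFinset] at hu2
        have := codeg_le hinj hreg hu2
        omega
      calc ∑ u ∈ (G.neighborFinset v).erase z,
          #(G.neighborFinset v ∩ G.neighborFinset u)
          ≤ #((G.neighborFinset v).erase z) • 5 := by
            rw [← Finset.sum_const]
            exact Finset.sum_le_sum hb
        _ = 30 := by
            rw [Finset.card_erase_of_mem hzs, hcards, smul_eq_mul]
    have hadd := Finset.sum_erase_add (G.neighborFinset v)
      (fun u => #(G.neighborFinset v ∩ G.neighborFinset u)) hzs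
    omega
  have hzO : z ∈ univ \ insert v (G.neighborFinset v) := by
    rw [Finset.mem_sdiff]
    refine ⟨Finset.mem_univ z, fun hin => ?_⟩
    rw [Finset.mem_insert] at hin
    tauto
  have hcardO : #(univ \ insert v (G.neighborFinset v)) = 8 := cardO hreg hn
  have heinO : ein G (univ \ insert v (G.neighborFinset v)) = 46 := by
    have h := einO (v := v) hreg hn
    rw [hv] at h
    omega
  have hnaO : na G (univ \ insert v (G.neighborFinset v)) = 10 := by
    have := ein_add_na G (univ \ insert v (G.neighborFinset v))
    rw [hcardO, heinO] at this
    omega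
  have hK : #(G.neighborFinset z ∩ (univ \ insert v (G.neighborFinset v))) ≤ 3 := by
    have h1 := ein_add_na G (G.neighborFinset z ∩ (univ \ insert v (G.neighborFinset v)))
    have h2 : ein G (G.neighborFinset z ∩ (univ \ insert v (G.neighborFinset v)))
        ≤ ein G (G.neighborFinset z) := ein_mono G Finset.inter_subset_left
    have h3 : ein G (G.neighborFinset z) = 0 := by rw [ein_nbr_eq, hz]
    have h4 : na G (G.neighborFinset z ∩ (univ \ insert v (G.neighborFinset v)))
        ≤ na G (univ \ insert v (G.neighborFinset v)) := na_mono G Finset.inter_subset_right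
    by_contra hcon
    have hge : 4 ≤ #(G.neighborFinset z ∩ (univ \ insert v (G.neighborFinset v))) := by omega
    have hmul := Nat.mul_le_mul hge (show 3 ≤
      #(G.neighborFinset z ∩ (univ \ insert v (G.neighborFinset v))) - 1 by omega)
    omega
  have hcrossz : 4 ≤ #(G.neighborFinset z ∩ insert v (G.neighborFinset v)) := by
    have := cross_split hreg z (insert v (G.neighborFinset v))
    omega
  have hM := Mout hreg (insert v (G.neighborFinset v)) hcardO
  have hsum2 : 11 ≤ ∑ o ∈ univ \ insert v (G.neighborFinset v),
      #(G.neighborFinset o ∩ insert v (G.neighborFinset v)) := by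
    have h1 := sum_lb (univ \ insert v (G.neighborFinset v))
      (fun o => #(G.neighborFinset o ∩ insert v (G.neighborFinset v))) {z}
      (by intro x hx; rw [Finset.mem_singleton] at hx; subst hx; exact hzO)
      (fun o ho => cross_pos hinj hreg hn o ho)
    simp only [Finset.sum_singleton, Finset.card_singleton, hcardO] at h1
    omega
  omega

include hinj hreg hn in
lemma case16_low {v z0 z1 z2 z3 z4 : V} (hv : K3deg G v = 15)
    (h0 : K3deg G z0 = 0) (h1 : K3deg G z1 = 1) (h2 : K3deg G z2 = 2)
    (h3 : K3deg G z3 = 3) (h4 : K3deg G z4 = 4) : False := by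
  have hcards : #(G.neighborFinset v) = 7 := card_nbr _ hreg v
  have heins : ein G (G.neighborFinset v) = 30 := by rw [ein_nbr_eq, hv]
  have hcardO : #(univ \ insert v (G.neighborFinset v)) = 8 := cardO hreg hn
  have heinO : ein G (univ \ insert v (G.neighborFinset v)) = 44 := by
    have h := einO (v := v) hreg hn
    rw [hv] at h
    omega
  have hnaO : na G (univ \ insert v (G.neighborFinset v)) = 12 := by
    have := ein_add_na G (univ \ insert v (G.neighborFinset v))
    rw [hcardO, heinO] at this
    omega
  have hM : ∑ o ∈ univ \ insert v (G.neighborFinset v),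
      #(G.neighborFinset o ∩ insert v (G.neighborFinset v)) = 12 := by
    have := Mout hreg (insert v (G.neighborFinset v)) hcardO
    omega
  have hone : ∀ o ∈ univ \ insert v (G.neighborFinset v),
      1 ≤ #(G.neighborFinset o ∩ insert v (G.neighborFinset v)) :=
    fun o ho => cross_pos hinj hreg hn o ho
  -- membership in O for low vertices not in the neighborhood
  have hmemO : ∀ x : V, K3deg G x ≤ 4 → x ∉ G.neighborFinset v →
      x ∈ univ \ insert v (G.neighborFinset v) := by
    intro x hx hxs
    rw [Finset.mem_sdiff]
    refine ⟨Finset.mem_univ x, fun hin => ?_⟩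
    rw [Finset.mem_insert] at hin
    rcases hin with rfl | hin
    · omega
    · exact hxs hin
  -- pair and triple constraints for low vertices inside the neighborhood
  have hsumc : ∑ u ∈ G.neighborFinset v,
      #(G.neighborFinset v ∩ G.neighborFinset u) = 30 := heins
  have hcb : ∀ u ∈ G.neighborFinset v,
      #(G.neighborFinset v ∩ G.neighborFinset u) ≤ 5 := by
    intro u hu
    rw [SimpleGraph.mem_neighborFinset] at hu
    have := codeg_le hinj hreg hu
    omega
  have hpair : ∀ a b : V, a ∈ G.neighborFinset v → b ∈ G.neighborFinset v → a ≠ b →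
      5 ≤ K3deg G a + K3deg G b := by
    intro a b ha hb hab
    have hbe : b ∈ (G.neighborFinset v).erase a := Finset.mem_erase.mpr ⟨hab.symm, hb⟩
    have e1 := Finset.sum_erase_add (G.neighborFinset v)
      (fun u => #(G.neighborFinset v ∩ G.neighborFinset u)) ha
    have e2 := Finset.sum_erase_add ((G.neighborFinset v).erase a)
      (fun u => #(G.neighborFinset v ∩ G.neighborFinset u)) hbe
    have hrest : ∑ u ∈ ((G.neighborFinset v).erase a).erase b,
        #(G.neighborFinset v ∩ G.neighborFinset u) ≤ 25 := by
      calc ∑ u ∈ ((G.neighborFinset v).erase a).erase b,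
          #(G.neighborFinset v ∩ G.neighborFinset u)
          ≤ #(((G.neighborFinset v).erase a).erase b) • 5 := by
            rw [← Finset.sum_const]
            refine Finset.sum_le_sum fun u hu => hcb u ?_
            exact Finset.mem_of_mem_erase (Finset.mem_of_mem_erase hu)
        _ ≤ 25 := by
            rw [Finset.card_erase_of_mem hbe, Finset.card_erase_of_mem ha, hcards,
              smul_eq_mul]
    have hca := coord_le_K3deg (G := G) ha
    have hcbb := coord_le_K3deg (G := G) hb
    omega
  have htriple : ∀ a b c : V, a ∈ G.neighborFinset v → b ∈ G.neighborFinset v →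
      c ∈ G.neighborFinset v → a ≠ b → a ≠ c → b ≠ c →
      10 ≤ K3deg G a + K3deg G b + K3deg G c := by
    intro a b c ha hb hc hab hac hbc
    have hbe : b ∈ (G.neighborFinset v).erase a := Finset.mem_erase.mpr ⟨hab.symm, hb⟩
    have hce : c ∈ ((G.neighborFinset v).erase a).erase b :=
      Finset.mem_erase.mpr ⟨hbc.symm, Finset.mem_erase.mpr ⟨hac.symm, hc⟩⟩
    have e1 := Finset.sum_erase_add (G.neighborFinset v)
      (fun u => #(G.neighborFinset v ∩ G.neighborFinset u)) ha
    have e2 := Finset.sum_erase_add ((G.neighborFinset v).erase a)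
      (fun u => #(G.neighborFinset v ∩ G.neighborFinset u)) hbe
    have e3 := Finset.sum_erase_add (((G.neighborFinset v).erase a).erase b)
      (fun u => #(G.neighborFinset v ∩ G.neighborFinset u)) hce
    have hrest : ∑ u ∈ ((((G.neighborFinset v).erase a).erase b).erase c),
        #(G.neighborFinset v ∩ G.neighborFinset u) ≤ 20 := by
      calc ∑ u ∈ ((((G.neighborFinset v).erase a).erase b).erase c),
          #(G.neighborFinset v ∩ G.neighborFinset u)
          ≤ #((((G.neighborFinset v).erase a).erase b).erase c) • 5 := by
            rw [← Finset.sum_const]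
            refine Finset.sum_le_sum fun u hu => hcb u ?_
            exact Finset.mem_of_mem_erase (Finset.mem_of_mem_erase
              (Finset.mem_of_mem_erase hu))
        _ ≤ 20 := by
            rw [Finset.card_erase_of_mem hce, Finset.card_erase_of_mem hbe,
              Finset.card_erase_of_mem ha, hcards, smul_eq_mul]
    have hca := coord_le_K3deg (G := G) ha
    have hcbb := coord_le_K3deg (G := G) hb
    have hcc := coord_le_K3deg (G := G) hc
    omega
  -- cross lower bounds for low vertices in O
  have hcross : ∀ z : V, z ∈ univ \ insert v (G.neighborFinset v) →
      ∀ k : ℕ, K3deg G z ≤ k → k ≤ 4 →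
      (if k ≤ 3 then 3 else 2) ≤ #(G.neighborFinset z ∩ insert v (G.neighborFinset v)) := by
    intro z hzO k hk hk4
    have hein1 := ein_add_na G (G.neighborFinset z ∩ (univ \ insert v (G.neighborFinset v)))
    have hein2 : ein G (G.neighborFinset z ∩ (univ \ insert v (G.neighborFinset v)))
        ≤ ein G (G.neighborFinset z) := ein_mono G Finset.inter_subset_left
    have hein3 : ein G (G.neighborFinset z) = 2 * K3deg G z := ein_nbr_eq G z
    have hna1 : na G (G.neighborFinset z ∩ (univ \ insert v (G.neighborFinset v)))
        ≤ na G (univ \ insert v (G.neighborFinset v)) := na_mono G Finset.inter_subset_right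
    have hsplitz := cross_split hreg z (insert v (G.neighborFinset v))
    set q := #(G.neighborFinset z ∩ (univ \ insert v (G.neighborFinset v))) with hq
    by_cases h3k : k ≤ 3
    · rw [if_pos h3k]
      by_contra hcon
      have hq5 : 5 ≤ q := by omega
      have := Nat.mul_le_mul hq5 (show 4 ≤ q - 1 by omega)
      omega
    · rw [if_neg h3k]
      by_contra hcon
      have hq6 : 6 ≤ q := by omega
      have := Nat.mul_le_mul hq6 (show 5 ≤ q - 1 by omega)
      omega
  -- distinctness
  have ne01 : z0 ≠ z1 := fun h => by rw [h, h1] at h0; omega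
  have ne02 : z0 ≠ z2 := fun h => by rw [h, h2] at h0; omega
  have ne03 : z0 ≠ z3 := fun h => by rw [h, h3] at h0; omega
  have ne04 : z0 ≠ z4 := fun h => by rw [h, h4] at h0; omega
  have ne12 : z1 ≠ z2 := fun h => by rw [h, h2] at h1; omega
  have ne13 : z1 ≠ z3 := fun h => by rw [h, h3] at h1; omega
  have ne14 : z1 ≠ z4 := fun h => by rw [h, h4] at h1; omega
  have ne23 : z2 ≠ z3 := fun h => by rw [h, h3] at h2; omega
  have ne24 : z2 ≠ z4 := fun h => by rw [h, h4] at h2; omega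
  have ne34 : z3 ≠ z4 := fun h => by rw [h, h4] at h3; omega
  -- final counting helper: a list of lows in O with total cross at least t > 12 - (8 - #L)
  -- we do the case analysis
  by_cases m0 : z0 ∈ G.neighborFinset v
  · -- all others are out
    have o1 : z1 ∉ G.neighborFinset v := fun m1 => by
      have := hpair z0 z1 m0 m1 ne01; omega
    have o2 : z2 ∉ G.neighborFinset v := fun m2 => by
      have := hpair z0 z2 m0 m2 ne02; omega
    have o3 : z3 ∉ G.neighborFinset v := fun m3 => by
      have := hpair z0 z3 m0 m3 ne03; omega
    have o4 : z4 ∉ G.neighborFinset v := fun m4 => by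
      have := hpair z0 z4 m0 m4 ne04; omega
    have i1 := hmemO z1 (by omega) o1
    have i2 := hmemO z2 (by omega) o2
    have i3 := hmemO z3 (by omega) o3
    have i4 := hmemO z4 (by omega) o4
    have c1 := hcross z1 i1 1 (by omega) (by omega)
    have c2 := hcross z2 i2 2 (by omega) (by omega)
    have c3 := hcross z3 i3 3 (by omega) (by omega)
    have c4 := hcross z4 i4 4 (by omega) (by omega)
    rw [if_pos (by omega : (1:ℕ) ≤ 3)] at c1
    rw [if_pos (by omega : (2:ℕ) ≤ 3)] at c2
    rw [if_pos (by omega : (3:ℕ) ≤ 3)] at c3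
    rw [if_neg (by omega : ¬ (4:ℕ) ≤ 3)] at c4
    have hsub : ({z1, z2, z3, z4} : Finset V) ⊆ univ \ insert v (G.neighborFinset v) := by
      intro x hx
      simp only [Finset.mem_insert, Finset.mem_singleton] at hx
      rcases hx with rfl | rfl | rfl | rfl
      exacts [i1, i2, i3, i4]
    have hlb := sum_lb (univ \ insert v (G.neighborFinset v))
      (fun o => #(G.neighborFinset o ∩ insert v (G.neighborFinset v)))
      {z1, z2, z3, z4} hsub hone
    rw [sum4 _ ne12 ne13 ne14 ne23 ne24 ne34,
      card4 ne12 ne13 ne14 ne23 ne24 ne34, hcardO, hM] at hlb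
    omega
  · -- z0 not a neighbor of v
    by_cases m1 : z1 ∈ G.neighborFinset v
    · -- z1 in s: z2,z3 out
      have o2 : z2 ∉ G.neighborFinset v := fun m2 => by
        have := hpair z1 z2 m1 m2 ne12; omega
      have o3 : z3 ∉ G.neighborFinset v := fun m3 => by
        have := hpair z1 z3 m1 m3 ne13; omega
      by_cases m4 : z4 ∈ G.neighborFinset v
      · -- lows in O: z0 z2 z3
        have i0 := hmemO z0 (by omega) m0
        have i2 := hmemO z2 (by omega) o2
        have i3 := hmemO z3 (by omega) o3
        have c0 := hcross z0 i0 0 (by omega) (by omega)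
        rw [if_pos (by omega : (0:ℕ) ≤ 3)] at c0
        have c2 := hcross z2 i2 2 (by omega) (by omega)
        rw [if_pos (by omega : (2:ℕ) ≤ 3)] at c2
        have c3 := hcross z3 i3 3 (by omega) (by omega)
        rw [if_pos (by omega : (3:ℕ) ≤ 3)] at c3
        have hsub : ({z0, z2, z3} : Finset V) ⊆ univ \ insert v (G.neighborFinset v) := by
          intro x hx
          simp only [Finset.mem_insert, Finset.mem_singleton] at hx
          rcases hx with rfl | rfl | rfl
          exacts [i0, i2, i3]
        have hlb := sum_lb (univ \ insert v (G.neighborFinset v))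
          (fun o => #(G.neighborFinset o ∩ insert v (G.neighborFinset v)))
          {z0, z2, z3} hsub hone
        rw [sum3 _ ne02 ne03 ne23, card3 ne02 ne03 ne23, hcardO, hM] at hlb
        omega
      · -- lows in O: z0 z2 z3 z4
        have i0 := hmemO z0 (by omega) m0
        have i2 := hmemO z2 (by omega) o2
        have i3 := hmemO z3 (by omega) o3
        have i4 := hmemO z4 (by omega) m4
        have c0 := hcross z0 i0 0 (by omega) (by omega)
        rw [if_pos (by omega : (0:ℕ) ≤ 3)] at c0
        have c2 := hcross z2 i2 2 (by omega) (by omega)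
        rw [if_pos (by omega : (2:ℕ) ≤ 3)] at c2
        have c3 := hcross z3 i3 3 (by omega) (by omega)
        rw [if_pos (by omega : (3:ℕ) ≤ 3)] at c3
        have c4 := hcross z4 i4 4 (by omega) (by omega)
        rw [if_neg (by omega : ¬ (4:ℕ) ≤ 3)] at c4
        have hsub : ({z0, z2, z3, z4} : Finset V) ⊆ univ \ insert v (G.neighborFinset v) := by
          intro x hx
          simp only [Finset.mem_insert, Finset.mem_singleton] at hx
          rcases hx with rfl | rfl | rfl | rfl
          exacts [i0, i2, i3, i4]
        have hlb := sum_lb (univ \ insert v (G.neighborFinset v))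
          (fun o => #(G.neighborFinset o ∩ insert v (G.neighborFinset v)))
          {z0, z2, z3, z4} hsub hone
        rw [sum4 _ ne02 ne03 ne04 ne23 ne24 ne34, card4 ne02 ne03 ne04 ne23 ne24 ne34, hcardO, hM] at hlb
        omega
    · by_cases m2 : z2 ∈ G.neighborFinset v
      · by_cases m3 : z3 ∈ G.neighborFinset v
        · have o4 : z4 ∉ G.neighborFinset v := fun m4 => by
            have := htriple z2 z3 z4 m2 m3 m4 ne23 ne24 ne34; omega
          have i0 := hmemO z0 (by omega) m0
          have i1 := hmemO z1 (by omega) m1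
          have i4 := hmemO z4 (by omega) o4
          have c0 := hcross z0 i0 0 (by omega) (by omega)
          rw [if_pos (by omega : (0:ℕ) ≤ 3)] at c0
          have c1 := hcross z1 i1 1 (by omega) (by omega)
          rw [if_pos (by omega : (1:ℕ) ≤ 3)] at c1
          have c4 := hcross z4 i4 4 (by omega) (by omega)
          rw [if_neg (by omega : ¬ (4:ℕ) ≤ 3)] at c4
          have hsub : ({z0, z1, z4} : Finset V) ⊆ univ \ insert v (G.neighborFinset v) := by
            intro x hx
            simp only [Finset.mem_insert, Finset.mem_singleton] at hx
            rcases hx with rfl | rfl | rfl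
            exacts [i0, i1, i4]
          have hlb := sum_lb (univ \ insert v (G.neighborFinset v))
            (fun o => #(G.neighborFinset o ∩ insert v (G.neighborFinset v)))
            {z0, z1, z4} hsub hone
          rw [sum3 _ ne01 ne04 ne14, card3 ne01 ne04 ne14, hcardO, hM] at hlb
          omega
        · by_cases m4 : z4 ∈ G.neighborFinset v
          ·
            have i0 := hmemO z0 (by omega) m0
            have i1 := hmemO z1 (by omega) m1
            have i3 := hmemO z3 (by omega) m3
            have c0 := hcross z0 i0 0 (by omega) (by omega)
            rw [if_pos (by omega : (0:ℕ) ≤ 3)] at c0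
            have c1 := hcross z1 i1 1 (by omega) (by omega)
            rw [if_pos (by omega : (1:ℕ) ≤ 3)] at c1
            have c3 := hcross z3 i3 3 (by omega) (by omega)
            rw [if_pos (by omega : (3:ℕ) ≤ 3)] at c3
            have hsub : ({z0, z1, z3} : Finset V) ⊆ univ \ insert v (G.neighborFinset v) := by
              intro x hx
              simp only [Finset.mem_insert, Finset.mem_singleton] at hx
              rcases hx with rfl | rfl | rfl
              exacts [i0, i1, i3]
            have hlb := sum_lb (univ \ insert v (G.neighborFinset v))
              (fun o => #(G.neighborFinset o ∩ insert v (G.neighborFinset v)))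
              {z0, z1, z3} hsub hone
            rw [sum3 _ ne01 ne03 ne13, card3 ne01 ne03 ne13, hcardO, hM] at hlb
            omega
          ·
            have i0 := hmemO z0 (by omega) m0
            have i1 := hmemO z1 (by omega) m1
            have i3 := hmemO z3 (by omega) m3
            have i4 := hmemO z4 (by omega) m4
            have c0 := hcross z0 i0 0 (by omega) (by omega)
            rw [if_pos (by omega : (0:ℕ) ≤ 3)] at c0
            have c1 := hcross z1 i1 1 (by omega) (by omega)
            rw [if_pos (by omega : (1:ℕ) ≤ 3)] at c1
            have c3 := hcross z3 i3 3 (by omega) (by omega)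
            rw [if_pos (by omega : (3:ℕ) ≤ 3)] at c3
            have c4 := hcross z4 i4 4 (by omega) (by omega)
            rw [if_neg (by omega : ¬ (4:ℕ) ≤ 3)] at c4
            have hsub : ({z0, z1, z3, z4} : Finset V) ⊆ univ \ insert v (G.neighborFinset v) := by
              intro x hx
              simp only [Finset.mem_insert, Finset.mem_singleton] at hx
              rcases hx with rfl | rfl | rfl | rfl
              exacts [i0, i1, i3, i4]
            have hlb := sum_lb (univ \ insert v (G.neighborFinset v))
              (fun o => #(G.neighborFinset o ∩ insert v (G.neighborFinset v)))
              {z0, z1, z3, z4} hsub hone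
            rw [sum4 _ ne01 ne03 ne04 ne13 ne14 ne34, card4 ne01 ne03 ne04 ne13 ne14 ne34, hcardO, hM] at hlb
            omega
      · by_cases m3 : z3 ∈ G.neighborFinset v
        · by_cases m4 : z4 ∈ G.neighborFinset v
          ·
            have i0 := hmemO z0 (by omega) m0
            have i1 := hmemO z1 (by omega) m1
            have i2 := hmemO z2 (by omega) m2
            have c0 := hcross z0 i0 0 (by omega) (by omega)
            rw [if_pos (by omega : (0:ℕ) ≤ 3)] at c0
            have c1 := hcross z1 i1 1 (by omega) (by omega)
            rw [if_pos (by omega : (1:ℕ) ≤ 3)] at c1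
            have c2 := hcross z2 i2 2 (by omega) (by omega)
            rw [if_pos (by omega : (2:ℕ) ≤ 3)] at c2
            have hsub : ({z0, z1, z2} : Finset V) ⊆ univ \ insert v (G.neighborFinset v) := by
              intro x hx
              simp only [Finset.mem_insert, Finset.mem_singleton] at hx
              rcases hx with rfl | rfl | rfl
              exacts [i0, i1, i2]
            have hlb := sum_lb (univ \ insert v (G.neighborFinset v))
              (fun o => #(G.neighborFinset o ∩ insert v (G.neighborFinset v)))
              {z0, z1, z2} hsub hone
            rw [sum3 _ ne01 ne02 ne12, card3 ne01 ne02 ne12, hcardO, hM] at hlb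
            omega
          ·
            have i0 := hmemO z0 (by omega) m0
            have i1 := hmemO z1 (by omega) m1
            have i2 := hmemO z2 (by omega) m2
            have i4 := hmemO z4 (by omega) m4
            have c0 := hcross z0 i0 0 (by omega) (by omega)
            rw [if_pos (by omega : (0:ℕ) ≤ 3)] at c0
            have c1 := hcross z1 i1 1 (by omega) (by omega)
            rw [if_pos (by omega : (1:ℕ) ≤ 3)] at c1
            have c2 := hcross z2 i2 2 (by omega) (by omega)
            rw [if_pos (by omega : (2:ℕ) ≤ 3)] at c2
            have c4 := hcross z4 i4 4 (by omega) (by omega)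
            rw [if_neg (by omega : ¬ (4:ℕ) ≤ 3)] at c4
            have hsub : ({z0, z1, z2, z4} : Finset V) ⊆ univ \ insert v (G.neighborFinset v) := by
              intro x hx
              simp only [Finset.mem_insert, Finset.mem_singleton] at hx
              rcases hx with rfl | rfl | rfl | rfl
              exacts [i0, i1, i2, i4]
            have hlb := sum_lb (univ \ insert v (G.neighborFinset v))
              (fun o => #(G.neighborFinset o ∩ insert v (G.neighborFinset v)))
              {z0, z1, z2, z4} hsub hone
            rw [sum4 _ ne01 ne02 ne04 ne12 ne14 ne24, card4 ne01 ne02 ne04 ne12 ne14 ne24, hcardO, hM] at hlb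
            omega
        · by_cases m4 : z4 ∈ G.neighborFinset v
          ·
            have i0 := hmemO z0 (by omega) m0
            have i1 := hmemO z1 (by omega) m1
            have i2 := hmemO z2 (by omega) m2
            have i3 := hmemO z3 (by omega) m3
            have c0 := hcross z0 i0 0 (by omega) (by omega)
            rw [if_pos (by omega : (0:ℕ) ≤ 3)] at c0
            have c1 := hcross z1 i1 1 (by omega) (by omega)
            rw [if_pos (by omega : (1:ℕ) ≤ 3)] at c1
            have c2 := hcross z2 i2 2 (by omega) (by omega)
            rw [if_pos (by omega : (2:ℕ) ≤ 3)] at c2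
            have c3 := hcross z3 i3 3 (by omega) (by omega)
            rw [if_pos (by omega : (3:ℕ) ≤ 3)] at c3
            have hsub : ({z0, z1, z2, z3} : Finset V) ⊆ univ \ insert v (G.neighborFinset v) := by
              intro x hx
              simp only [Finset.mem_insert, Finset.mem_singleton] at hx
              rcases hx with rfl | rfl | rfl | rfl
              exacts [i0, i1, i2, i3]
            have hlb := sum_lb (univ \ insert v (G.neighborFinset v))
              (fun o => #(G.neighborFinset o ∩ insert v (G.neighborFinset v)))
              {z0, z1, z2, z3} hsub hone
            rw [sum4 _ ne01 ne02 ne03 ne12 ne13 ne23, card4 ne01 ne02 ne03 ne12 ne13 ne23, hcardO, hM] at hlb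
            omega
          ·
            have i0 := hmemO z0 (by omega) m0
            have i1 := hmemO z1 (by omega) m1
            have i2 := hmemO z2 (by omega) m2
            have i3 := hmemO z3 (by omega) m3
            have i4 := hmemO z4 (by omega) m4
            have c0 := hcross z0 i0 0 (by omega) (by omega)
            rw [if_pos (by omega : (0:ℕ) ≤ 3)] at c0
            have c1 := hcross z1 i1 1 (by omega) (by omega)
            rw [if_pos (by omega : (1:ℕ) ≤ 3)] at c1
            have c2 := hcross z2 i2 2 (by omega) (by omega)
            rw [if_pos (by omega : (2:ℕ) ≤ 3)] at c2
            have c3 := hcross z3 i3 3 (by omega) (by omega)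
            rw [if_pos (by omega : (3:ℕ) ≤ 3)] at c3
            have c4 := hcross z4 i4 4 (by omega) (by omega)
            rw [if_neg (by omega : ¬ (4:ℕ) ≤ 3)] at c4
            have hsub : ({z0, z1, z2, z3, z4} : Finset V) ⊆ univ \ insert v (G.neighborFinset v) := by
              intro x hx
              simp only [Finset.mem_insert, Finset.mem_singleton] at hx
              rcases hx with rfl | rfl | rfl | rfl | rfl
              exacts [i0, i1, i2, i3, i4]
            have hlb := sum_lb (univ \ insert v (G.neighborFinset v))
              (fun o => #(G.neighborFinset o ∩ insert v (G.neighborFinset v)))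
              {z0, z1, z2, z3, z4} hsub hone
            rw [sum5 _ ne01 ne02 ne03 ne04 ne12 ne13 ne14 ne23 ne24 ne34, card5 ne01 ne02 ne03 ne04 ne12 ne13 ne14 ne23 ne24 ne34, hcardO, hM] at hlb
            omega

end sixteen

end basic
end NoK3

theorem stmt15 {V : Type*} [Fintype V] [DecidableEq V] [Nonempty V]
    (G : SimpleGraph V) [DecidableRel G.Adj]
    (hreg : G.IsRegularOfDegree 7) :
    ¬ (∀ u w : V, K3deg G u = K3deg G w → u = w) := by
  classical
  intro hinj
  open Finset NoK3 in
  have hinjf : Function.Injective (K3deg G) := fun a b h => hinj a b h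
  obtain ⟨v0⟩ := ‹Nonempty V›
  -- n ≥ 8
  have h8 : 8 ≤ Fintype.card V := by
    have h1 : (G.neighborFinset v0) ⊆ Finset.univ.erase v0 := by
      intro w hw
      rw [Finset.mem_erase]
      rw [SimpleGraph.mem_neighborFinset] at hw
      exact ⟨hw.ne', Finset.mem_univ w⟩
    have h2 := Finset.card_le_card h1
    rw [card_nbr _ hreg, Finset.card_erase_of_mem (Finset.mem_univ v0),
      Finset.card_univ] at h2
    omega
  -- n is even
  have heven : Fintype.card V % 2 = 0 := by
    have hsum := G.sum_degrees_eq_twice_card_edges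
    rw [Finset.sum_congr rfl (fun v _ => hreg v), Finset.sum_const, smul_eq_mul,
      Finset.card_univ] at hsum
    omega
  -- triangle degrees are at most 17
  have hb17 : ∀ x : V, K3deg G x ≤ 17 := by
    intro x
    have := K3deg_bound hinj hreg x
    omega
  -- n ≤ 18
  have h18 : Fintype.card V ≤ 18 := by
    by_contra hcon
    refine pigeon hinj (Finset.Icc 0 17) (fun x => ?_) (by
      rw [Nat.card_Icc]
      omega)
    rw [Finset.mem_Icc]
    exact ⟨Nat.zero_le _, hb17 x⟩
  have hcases : Fintype.card V = 8 ∨ Fintype.card V = 10 ∨ Fintype.card V = 12 ∨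
      Fintype.card V = 14 ∨ Fintype.card V = 16 ∨ Fintype.card V = 18 := by omega
  -- the basic formula facts
  have hformula := fun x => K3deg_formula G hreg x
  have hcardA := fun x => cardA G hreg x
  have heinA : ∀ x : V, ein G (univ \ insert x (G.neighborFinset x)) ≤
      (Fintype.card V - 8) * (Fintype.card V - 8 - 1) := by
    intro x
    have h1 := ein_add_na G (univ \ insert x (G.neighborFinset x))
    rw [hcardA x] at h1
    omega
  rcases hcases with hn | hn | hn | hn | hn | hn
  · -- n = 8 : K3deg is constantly 21
    refine pigeon hinj {21} (fun x => ?_) (by rw [Finset.card_singleton, hn]; omega)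
    have h1 := hformula x
    have h2 := heinA x
    rw [hn] at h1 h2
    rw [Finset.mem_singleton]
    omega
  · -- n = 10 : K3deg lies in [14, 15]
    refine pigeon hinj (Finset.Icc 14 15) (fun x => ?_) (by rw [Nat.card_Icc, hn]; omega)
    have h1 := hformula x
    have h2 := heinA x
    rw [hn] at h1 h2
    rw [Finset.mem_Icc]
    omega
  · -- n = 12 : K3deg lies in [7, 13]
    refine pigeon hinj (Finset.Icc 7 13) (fun x => ?_) (by rw [Nat.card_Icc, hn]; omega)
    have h1 := hformula x
    have h2 := heinA x
    rw [hn] at h1 h2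
    rw [Finset.mem_Icc]
    omega
  · -- n = 14 : pass to the complement graph, which is 6-regular
    have hregc : Gᶜ.IsRegularOfDegree 6 := by
      have := hreg.compl
      rwa [hn] at this
    have hnbrc : ∀ x : V, Gᶜ.neighborFinset x = univ \ insert x (G.neighborFinset x) := by
      intro x
      rw [SimpleGraph.neighborFinset_compl]
      ext w
      simp only [Finset.mem_sdiff, Finset.mem_compl, Finset.mem_singleton,
        Finset.mem_univ, true_and, Finset.mem_insert]
      tauto
    have hrel : ∀ x : V, 2 * K3deg Gᶜ x + 2 * K3deg G x = 30 := by
      intro x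
      have hG : 2 * K3deg G x = ein G (univ \ insert x (G.neighborFinset x)) := by
        have h1 := hformula x
        rw [hn] at h1
        omega
      have hGc : 2 * K3deg Gᶜ x = na G (univ \ insert x (G.neighborFinset x)) := by
        rw [← ein_nbr_eq Gᶜ x, hnbrc x, ein_compl_eq_na]
      have h2 := ein_add_na G (univ \ insert x (G.neighborFinset x))
      rw [hcardA x, hn] at h2
      omega
    have hinjc : ∀ u w : V, K3deg Gᶜ u = K3deg Gᶜ w → u = w := by
      intro u w h
      have h1 := hrel u
      have h2 := hrel w
      exact hinj u w (by omega)
    have hbc : ∀ x : V, K3deg Gᶜ x ≤ 12 := by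
      intro x
      have := K3deg_bound hinjc hregc x
      omega
    refine pigeon hinj (Finset.Icc 3 15) (fun x => ?_) (by rw [Nat.card_Icc, hn]; omega)
    have h1 := hrel x
    have h2 := hbc x
    rw [Finset.mem_Icc]
    omega
  · -- n = 16 : the hard case
    have himg : univ.image (K3deg G) ⊆ Finset.Icc 0 16 := by
      intro k hk
      obtain ⟨x, _, rfl⟩ := Finset.mem_image.mp hk
      have hb := hb17 x
      have h17 := no17 hinj hreg x
      rw [Finset.mem_Icc]
      omega
    have hcardimg : #(univ.image (K3deg G)) = 16 := by
      rw [Finset.card_image_of_injective _ hinjf, Finset.card_univ, hn]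
    have hmiss : #(Finset.Icc 0 16 \ univ.image (K3deg G)) = 1 := by
      rw [Finset.card_sdiff_of_subset himg, hcardimg, Nat.card_Icc]
    obtain ⟨m, hm⟩ := Finset.card_eq_one.mp hmiss
    have hmem : ∀ k : ℕ, k ≤ 16 → k ≠ m → ∃ x : V, K3deg G x = k := by
      intro k hk hkm
      have hin : k ∈ univ.image (K3deg G) := by
        by_contra hcon
        have hks : k ∈ Finset.Icc 0 16 \ univ.image (K3deg G) :=
          Finset.mem_sdiff.mpr ⟨Finset.mem_Icc.mpr ⟨Nat.zero_le _, hk⟩, hcon⟩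
        rw [hm, Finset.mem_singleton] at hks
        exact hkm hks
      obtain ⟨x, _, hx⟩ := Finset.mem_image.mp hin
      exact ⟨x, hx⟩
    have hmIcc : m ∈ Finset.Icc 0 16 := by
      have : m ∈ Finset.Icc 0 16 \ univ.image (K3deg G) := by
        rw [hm]; exact Finset.mem_singleton_self m
      exact (Finset.mem_sdiff.mp this).1
    have hm16 : m ≤ 16 := (Finset.mem_Icc.mp hmIcc).2
    -- divisibility : the sum of all triangle degrees is 136 - m and divisible by 3
    have hsumim : ∑ k ∈ univ.image (K3deg G), k = ∑ x : V, K3deg G x :=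
      Finset.sum_image (fun a _ b _ h => hinj a b h)
    have hdvd := sum_K3deg G
    have hsdiff := Finset.sum_sdiff (f := fun k => k) himg
    rw [hm, Finset.sum_singleton] at hsdiff
    have hIccsum : ∑ k ∈ Finset.Icc 0 16, k = 136 := by decide
    have hm3 : m % 3 = 1 := by omega
    obtain ⟨z, hz⟩ := hmem 0 (by omega) (by omega)
    by_cases hc16 : m = 16
    · obtain ⟨v, hv⟩ := hmem 15 (by omega) (by omega)
      obtain ⟨z1, hz1⟩ := hmem 1 (by omega) (by omega)
      obtain ⟨z2, hz2⟩ := hmem 2 (by omega) (by omega)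
      obtain ⟨z3, hz3⟩ := hmem 3 (by omega) (by omega)
      obtain ⟨z4, hz4⟩ := hmem 4 (by omega) (by omega)
      exact case16_low hinj hreg hn hv hz hz1 hz2 hz3 hz4
    · obtain ⟨v, hv⟩ := hmem 16 (by omega) (fun h => hc16 h.symm)
      exact case16_top hinj hreg hn hv hz
  · -- n = 18 : the image is all of [0, 17], impossible since 17 is not attained
    have himg : univ.image (K3deg G) ⊆ Finset.Icc 0 17 := by
      intro k hk
      obtain ⟨x, _, rfl⟩ := Finset.mem_image.mp hk
      rw [Finset.mem_Icc]
      exact ⟨Nat.zero_le _, hb17 x⟩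
    have hcardimg : #(univ.image (K3deg G)) = 18 := by
      rw [Finset.card_image_of_injective _ hinjf, Finset.card_univ, hn]
    have heq : univ.image (K3deg G) = Finset.Icc 0 17 :=
      Finset.eq_of_subset_of_card_le himg (by rw [hcardimg, Nat.card_Icc])
    have h17 : (17 : ℕ) ∈ univ.image (K3deg G) := by
      rw [heq, Finset.mem_Icc]
      omega
    obtain ⟨x, _, hx⟩ := Finset.mem_image.mp h17
    exact no17 hinj hreg x hx
end
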